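/- arXiv:1109.0326 — 8 statements merged into one kernel-verified Lean document; each statement's English description precedes it below -/
import Mathlib

section
/- Let n ≥ 1 be an integer, let a < b be real numbers, let p be a real polynomial of degree n with leading coefficient 1/n!, and let f : [a,b] → ℝ be such that f^{(n-1)} is absolutely continuous on [a,b]. Then ∫_a^b f(x) dx = I_{(a,b)}(p,f) + E_{(a,b)}(p,f). -/
open MeasureTheory intervalIntegral Finset

/-- The `n`-th Bernoulli polynomial, evaluated at a real number `x`. -/
noncomputable def bernPoly (n : ℕ) (x : ℝ) : ℝ :=
  Polynomial.aeval x (Polynomial.bernoulli n)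

/-- The integration scheme `I_{(a,b)}(p, f)` generated by a degree `n` polynomial `p`,
where the derivatives of `f` are taken within `[a,b]`:
`I_{(a,b)}(p,f) = Σ_{j=1}^{n} (-1)^{j-1} (b-a)^j (p^{(n-j)}(1) f^{(j-1)}(b) − p^{(n-j)}(0) f^{(j-1)}(a))`. -/
noncomputable def schemeI (a b : ℝ) (n : ℕ) (p : Polynomial ℝ) (f : ℝ → ℝ) : ℝ :=
  ∑ j ∈ Finset.Icc 1 n, (-1 : ℝ) ^ (j - 1) * (b - a) ^ j *
    ((Polynomial.derivative^[n - j] p).eval (1 : ℝ) *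
        iteratedDerivWithin (j - 1) f (Set.Icc a b) b -
      (Polynomial.derivative^[n - j] p).eval (0 : ℝ) *
        iteratedDerivWithin (j - 1) f (Set.Icc a b) a)

/-- The error term `E_{(a,b)}(p,f) = (-1)^n (b-a)^{n+1} ∫_0^1 p(x) f^{(n)}(a+(b-a)x) dx`,
where `p : ℝ → ℝ` plays the role of the polynomial and `fn : ℝ → ℝ` that of the `n`-th
derivative of `f`. -/
noncomputable def errE (a b : ℝ) (n : ℕ) (p : ℝ → ℝ) (fn : ℝ → ℝ) : ℝ :=
  (-1 : ℝ) ^ n * (b - a) ^ (n + 1) * ∫ x in (0:ℝ)..1, p x * fn (a + (b - a) * x)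

/-- `g` is absolutely continuous on `[a,b]` with a.e. derivative (the integrable function) `g'`:
`g x = g a + ∫_a^x g'` for all `x ∈ [a,b]`. -/
def ACOn (g g' : ℝ → ℝ) (a b : ℝ) : Prop :=
  IntervalIntegrable g' volume a b ∧
    ∀ x ∈ Set.Icc a b, g x = g a + ∫ t in a..x, g' t

lemma ibp_ac {a b : ℝ} (hab : a ≤ b) {u u' v g : ℝ → ℝ}
    (hu : ∀ x, HasDerivAt u (u' x) x) (hu'c : Continuous u')
    (hg : IntervalIntegrable g volume a b)
    (hv : ∀ x ∈ Set.Icc a b, v x = v a + ∫ t in a..x, g t) :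
    ∫ t in a..b, u' t * v t = u b * v b - u a * v a - ∫ t in a..b, u t * g t := by
  have huc : Continuous u := by
    rw [continuous_iff_continuousAt]; exact fun x => (hu x).continuousAt
  have hgI : IntegrableOn g (Set.Ioc a b) volume := by
    rw [← intervalIntegrable_iff_integrableOn_Ioc_of_le hab]; exact hg
  have hu'I : IntegrableOn u' (Set.Ioc a b) volume :=
    (hu'c.integrableOn_Icc (a := a) (b := b)).mono_set Set.Ioc_subset_Icc_self
  have hftc : ∀ s, ∫ t in s..b, u' t = u b - u s := fun s =>
    intervalIntegral.integral_eq_sub_of_hasDerivAt (fun x _ => hu x)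
      (hu'c.intervalIntegrable s b)
  set μ := volume.restrict (Set.Ioc a b) with hμ
  have key : (∫ t in a..b, u' t * ∫ s in a..t, g s) = ∫ s in a..b, (u b - u s) * g s := by
    have h1 : Integrable (fun z : ℝ × ℝ => u' z.1 * g z.2) (μ.prod μ) :=
      Integrable.mul_prod hu'I hgI
    have hmeas : MeasurableSet {z : ℝ × ℝ | z.2 ≤ z.1} :=
      measurableSet_le measurable_snd measurable_fst
    have hH : Integrable
        (Set.indicator {z : ℝ × ℝ | z.2 ≤ z.1} (fun z => u' z.1 * g z.2)) (μ.prod μ) :=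
      h1.indicator hmeas
    have swap := MeasureTheory.integral_integral_swap
      (f := fun t s => Set.indicator {z : ℝ × ℝ | z.2 ≤ z.1}
        (fun z => u' z.1 * g z.2) (t, s)) (μ := μ) (ν := μ) hH
    have hL : (∫ t, ∫ s, Set.indicator {z : ℝ × ℝ | z.2 ≤ z.1}
        (fun z => u' z.1 * g z.2) (t, s) ∂μ ∂μ)
        = ∫ t in Set.Ioc a b, u' t * ∫ s in a..t, g s := by
      apply setIntegral_congr_fun measurableSet_Ioc
      intro t ht
      dsimp only
      have e1 : (fun s => Set.indicator {z : ℝ × ℝ | z.2 ≤ z.1}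
          (fun z => u' z.1 * g z.2) (t, s))
          = Set.indicator (Set.Iic t) (fun s => u' t * g s) := by
        ext s
        by_cases h : s ≤ t <;>
          simp [Set.indicator_apply, Set.mem_Iic, Set.mem_setOf_eq, h]
      rw [e1, MeasureTheory.integral_indicator measurableSet_Iic, hμ,
        Measure.restrict_restrict measurableSet_Iic]
      have e2 : Set.Iic t ∩ Set.Ioc a b = Set.Ioc a t := by
        ext s
        simp only [Set.mem_inter_iff, Set.mem_Iic, Set.mem_Ioc]
        exact ⟨fun h => ⟨h.2.1, h.1⟩, fun h => ⟨h.2, h.1, h.2.trans ht.2⟩⟩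
      rw [e2, MeasureTheory.integral_const_mul, ← intervalIntegral.integral_of_le ht.1.le]
    have hR : (∫ s, ∫ t, Set.indicator {z : ℝ × ℝ | z.2 ≤ z.1}
        (fun z => u' z.1 * g z.2) (t, s) ∂μ ∂μ)
        = ∫ s in Set.Ioc a b, (u b - u s) * g s := by
      apply setIntegral_congr_fun measurableSet_Ioc
      intro s hs
      dsimp only
      have e1 : (fun t => Set.indicator {z : ℝ × ℝ | z.2 ≤ z.1}
          (fun z => u' z.1 * g z.2) (t, s))
          = Set.indicator (Set.Ici s) (fun t => u' t * g s) := by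
        ext t
        by_cases h : s ≤ t <;>
          simp [Set.indicator_apply, Set.mem_Ici, Set.mem_setOf_eq, h]
      rw [e1, MeasureTheory.integral_indicator measurableSet_Ici, hμ,
        Measure.restrict_restrict measurableSet_Ici]
      have e2 : Set.Ici s ∩ Set.Ioc a b = Set.Icc s b := by
        ext t
        simp only [Set.mem_inter_iff, Set.mem_Ici, Set.mem_Ioc, Set.mem_Icc]
        exact ⟨fun h => ⟨h.1, h.2.2⟩, fun h => ⟨h.1, hs.1.trans_le h.1, h.2⟩⟩
      rw [e2, MeasureTheory.integral_mul_const, MeasureTheory.integral_Icc_eq_integral_Ioc,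
        ← intervalIntegral.integral_of_le hs.2, hftc s]
    rw [intervalIntegral.integral_of_le hab, intervalIntegral.integral_of_le hab]
    rw [← hL, ← hR]
    exact swap
  have hprimC : ContinuousOn (fun t => ∫ s in a..t, g s) (Set.uIcc a b) :=
    intervalIntegral.continuousOn_primitive_interval' hg Set.left_mem_uIcc
  have h2 : IntervalIntegrable (fun t => u' t * v a) volume a b :=
    (hu'c.mul continuous_const).intervalIntegrable a b
  have h3 : IntervalIntegrable (fun t => u' t * ∫ s in a..t, g s) volume a b :=
    (hu'c.continuousOn.mul hprimC).intervalIntegrable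
  have hvb : (∫ s in a..b, g s) = v b - v a := by
    have := hv b ⟨hab, le_refl b⟩; linarith
  have huI : IntervalIntegrable (fun s => u s * g s) volume a b :=
    hg.continuousOn_mul huc.continuousOn
  have hsplit : (∫ t in a..b, u' t * v t)
      = (∫ t in a..b, u' t * v a) + ∫ t in a..b, u' t * ∫ s in a..t, g s := by
    rw [← intervalIntegral.integral_add h2 h3]
    apply intervalIntegral.integral_congr
    intro t ht
    rw [Set.uIcc_of_le hab] at ht
    dsimp only
    rw [hv t ht]; ring
  have e3 : (∫ t in a..b, u' t * v a) = (u b - u a) * v a := by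
    rw [intervalIntegral.integral_mul_const, hftc a]
  have e4 : (∫ s in a..b, (u b - u s) * g s)
      = u b * (v b - v a) - ∫ s in a..b, u s * g s := by
    have : (∫ s in a..b, (u b - u s) * g s)
        = (∫ s in a..b, u b * g s) - ∫ s in a..b, u s * g s := by
      rw [← intervalIntegral.integral_sub (hg.const_mul _) huI]
      apply intervalIntegral.integral_congr
      intro t _; ring
    rw [this, intervalIntegral.integral_const_mul, hvb]
  rw [hsplit, key, e3, e4]; ring

/-- Main induction: after `k` integrations by parts. -/
lemma quad_aux (n : ℕ) (a b : ℝ) (hab : a < b) (p : Polynomial ℝ) (f : ℝ → ℝ)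
    (hAC : ∀ k, k + 1 ≤ n → ACOn (iteratedDerivWithin k f (Set.Icc a b))
      (iteratedDerivWithin (k + 1) f (Set.Icc a b)) a b)
    (hPn : ∀ x : ℝ, (Polynomial.derivative^[n] p).eval x = 1) :
    ∀ K, K ≤ n → ∫ x in a..b, f x =
      (∑ j ∈ Finset.Icc 1 K, (-1 : ℝ) ^ (j - 1) * (b - a) ^ j *
        ((Polynomial.derivative^[n - j] p).eval (1 : ℝ) *
            iteratedDerivWithin (j - 1) f (Set.Icc a b) b -
          (Polynomial.derivative^[n - j] p).eval (0 : ℝ) *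
            iteratedDerivWithin (j - 1) f (Set.Icc a b) a)) +
      (-1 : ℝ) ^ K * (b - a) ^ K *
        ∫ t in a..b, (Polynomial.derivative^[n - K] p).eval ((t - a) / (b - a)) *
          iteratedDerivWithin K f (Set.Icc a b) t := by
  have hc : (0:ℝ) < b - a := sub_pos.mpr hab
  have hc' : (b - a) ≠ 0 := ne_of_gt hc
  intro K hK
  induction K with
  | zero =>
    simp only [Nat.sub_zero, pow_zero, one_mul, Finset.Icc_eq_empty (by omega : ¬ (1:ℕ) ≤ 0),
      Finset.sum_empty, zero_add, iteratedDerivWithin_zero]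
    refine (intervalIntegral.integral_congr fun t _ => ?_).symm
    rw [hPn, one_mul]
  | succ k ih =>
    have hkn : k ≤ n := Nat.le_of_succ_le hK
    have IH := ih hkn
    have hm : n - k = (n - (k + 1)) + 1 := by omega
    have hAk := hAC k hK
    -- set up u
    have hu : ∀ x : ℝ, HasDerivAt
        (fun t => (Polynomial.derivative^[n - (k+1)] p).eval ((t - a) / (b - a)))
        ((Polynomial.derivative^[n - k] p).eval ((x - a) / (b - a)) * (b - a)⁻¹) x := by
      intro x
      have hinner : HasDerivAt (fun t : ℝ => (t - a) / (b - a)) ((b - a)⁻¹) x := by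
        simpa [one_div] using ((hasDerivAt_id x).sub_const a).div_const (b - a)
      have houter := Polynomial.hasDerivAt (Polynomial.derivative^[n - (k+1)] p)
        ((x - a) / (b - a))
      have := HasDerivAt.comp x houter hinner
      simpa [Function.comp_def, hm, Function.iterate_succ_apply'] using this
    have hu'c : Continuous fun x : ℝ =>
        (Polynomial.derivative^[n - k] p).eval ((x - a) / (b - a)) * (b - a)⁻¹ := by
      apply Continuous.mul _ continuous_const
      exact ((Polynomial.derivative^[n - k] p).continuous_aeval).comp
        ((continuous_id.sub continuous_const).div_const (b - a)) |>.congr (fun x => rfl)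
    have ibp := ibp_ac (a := a) (b := b) hab.le hu hu'c hAk.1 hAk.2
    rw [div_self hc', sub_self, zero_div] at ibp
    -- rewrite the tail integral from IH
    have etail : (∫ t in a..b,
        (Polynomial.derivative^[n - k] p).eval ((t - a) / (b - a)) *
          iteratedDerivWithin k f (Set.Icc a b) t)
        = (b - a) * ∫ t in a..b,
            ((Polynomial.derivative^[n - k] p).eval ((t - a) / (b - a)) * (b - a)⁻¹) *
              iteratedDerivWithin k f (Set.Icc a b) t := by
      rw [← intervalIntegral.integral_const_mul]
      apply intervalIntegral.integral_congr
      intro t _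
      dsimp only
      field_simp
    rw [IH, etail, ibp]
    rw [Finset.sum_Icc_succ_top (by omega : 1 ≤ k + 1)]
    simp only [Nat.add_sub_cancel]
    rw [pow_succ (-1 : ℝ), pow_succ (b - a)]
    ring

/-- For `n ≥ 1`, `a < b`, a real polynomial `p` of degree `n` with leading
coefficient `1/n!`, and `f : [a,b] → ℝ` whose derivative `f^{(n-1)}` is absolutely continuous
on `[a,b]`, one has `∫_a^b f(x) dx = I_{(a,b)}(p,f) + E_{(a,b)}(p,f)`. -/
theorem quadrature_formula (n : ℕ) (hn : 1 ≤ n) (a b : ℝ) (hab : a < b)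
    (p : Polynomial ℝ) (hdeg : p.natDegree = n)
    (hlead : p.leadingCoeff = 1 / (n.factorial : ℝ))
    (f : ℝ → ℝ) (hreg : ContDiffOn ℝ (n - 1 : ℕ) f (Set.Icc a b))
    (hAC : ACOn (iteratedDerivWithin (n - 1) f (Set.Icc a b))
      (iteratedDerivWithin n f (Set.Icc a b)) a b) :
    ∫ x in a..b, f x =
      schemeI a b n p f +
        errE a b n (fun x => p.eval x) (iteratedDerivWithin n f (Set.Icc a b)) := by
  have hc : (0:ℝ) < b - a := sub_pos.mpr hab
  have hc' : (b - a) ≠ 0 := ne_of_gt hc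
  have hS : UniqueDiffOn ℝ (Set.Icc a b) := uniqueDiffOn_Icc hab
  -- the top iterated derivative of p is the constant 1
  have hPn : ∀ x : ℝ, (Polynomial.derivative^[n] p).eval x = 1 := by
    intro x
    have hd0 : (Polynomial.derivative^[n] p).natDegree = 0 :=
      Nat.le_antisymm ((Polynomial.natDegree_iterate_derivative p n).trans (by omega))
        (Nat.zero_le _)
    rw [Polynomial.eq_C_of_natDegree_eq_zero hd0, Polynomial.eval_C,
      Polynomial.coeff_iterate_derivative]
    have hco : p.coeff (0 + n) = p.leadingCoeff := by
      rw [zero_add, ← hdeg]; rfl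
    rw [hco, hlead, zero_add, Nat.descFactorial_self, nsmul_eq_mul]
    rw [mul_one_div, div_self (by exact_mod_cast n.factorial_ne_zero)]
  -- the AC family
  have hACk : ∀ k, k + 1 ≤ n → ACOn (iteratedDerivWithin k f (Set.Icc a b))
      (iteratedDerivWithin (k + 1) f (Set.Icc a b)) a b := by
    intro k hk1
    by_cases hcase : k + 1 = n
    · have hk : k = n - 1 := by omega
      subst hk
      have : n - 1 + 1 = n := by omega
      rw [this]
      exact hAC
    · have hk2 : k + 1 ≤ n - 1 := by omega
      have hFcont : ContinuousOn (iteratedDerivWithin (k+1) f (Set.Icc a b)) (Set.Icc a b) :=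
        hreg.continuousOn_iteratedDerivWithin (by exact_mod_cast hk2) hS
      have hFi : IntervalIntegrable (iteratedDerivWithin (k+1) f (Set.Icc a b)) volume a b := by
        apply ContinuousOn.intervalIntegrable
        rwa [Set.uIcc_of_le hab.le]
      refine ⟨hFi, fun x hx => ?_⟩
      have hder : ∀ t ∈ Set.Icc a b, HasDerivWithinAt (iteratedDerivWithin k f (Set.Icc a b))
          (iteratedDerivWithin (k+1) f (Set.Icc a b) t) (Set.Icc a b) t := by
        intro t htS
        have hdiff : DifferentiableWithinAt ℝ (iteratedDerivWithin k f (Set.Icc a b))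
            (Set.Icc a b) t :=
          hreg.differentiableOn_iteratedDerivWithin (by exact_mod_cast (by omega : k < n - 1))
            hS t htS
        have h2 := hdiff.hasDerivWithinAt
        rwa [← iteratedDerivWithin_succ] at h2
      have hint : ∫ t in a..x, iteratedDerivWithin (k+1) f (Set.Icc a b) t
          = iteratedDerivWithin k f (Set.Icc a b) x
            - iteratedDerivWithin k f (Set.Icc a b) a := by
        apply intervalIntegral.integral_eq_sub_of_hasDeriv_right_of_le hx.1
        · exact ((hreg.continuousOn_iteratedDerivWithin
            (by exact_mod_cast (by omega : k ≤ n - 1)) hS).mono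
            (Set.Icc_subset_Icc le_rfl hx.2))
        · intro t ht
          have htab : t ∈ Set.Ioo a b := ⟨ht.1, lt_of_lt_of_le ht.2 hx.2⟩
          have := (hder t ⟨htab.1.le, htab.2.le⟩).hasDerivAt
            (Icc_mem_nhds htab.1 htab.2)
          exact this.hasDerivWithinAt
        · exact hFi.mono_set (by
            rw [Set.uIcc_of_le hx.1, Set.uIcc_of_le hab.le]
            exact Set.Icc_subset_Icc le_rfl hx.2)
      linarith [hint]
  have main := quad_aux n a b hab p f hACk hPn n le_rfl
  rw [main, schemeI, errE]
  congr 1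
  -- error term
  have hsub := intervalIntegral.integral_comp_mul_add (a := (0:ℝ)) (b := 1)
    (f := fun y => p.eval ((y - a) / (b - a)) *
      iteratedDerivWithin n f (Set.Icc a b) y) (c := b - a) hc' a
  have heq : ∀ x : ℝ, p.eval x * iteratedDerivWithin n f (Set.Icc a b) (a + (b - a) * x)
      = (fun y => p.eval ((y - a) / (b - a)) * iteratedDerivWithin n f (Set.Icc a b) y)
        ((b - a) * x + a) := by
    intro x
    dsimp only
    rw [add_sub_cancel_right, mul_div_cancel_left₀ _ hc', add_comm]
  rw [Nat.sub_self, Function.iterate_zero_apply]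
  calc (-1:ℝ) ^ n * (b - a) ^ n *
        ∫ t in a..b, p.eval ((t - a) / (b - a)) * iteratedDerivWithin n f (Set.Icc a b) t
      = (-1:ℝ) ^ n * (b - a) ^ (n+1) *
        ∫ x in (0:ℝ)..1, p.eval x * iteratedDerivWithin n f (Set.Icc a b) (a + (b - a) * x) := by
        rw [show (∫ x in (0:ℝ)..1, p.eval x *
            iteratedDerivWithin n f (Set.Icc a b) (a + (b - a) * x))
          = ∫ x in (0:ℝ)..1, (fun y => p.eval ((y - a) / (b - a)) *
              iteratedDerivWithin n f (Set.Icc a b) y) ((b - a) * x + a) from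
          intervalIntegral.integral_congr fun x _ => heq x]
        rw [hsub]
        rw [mul_zero, zero_add, mul_one, sub_add_cancel]
        rw [smul_eq_mul, pow_succ]
        field_simp
    _ = _ := rfl
end

section
/- Let n ≥ 2 be an integer and let p be a real polynomial of degree n with leading coefficient 1/n!. Then p is a telescoping polynomial, i.e. p^{(ℓ)}(0) = p^{(ℓ)}(1) for all 0 ≤ ℓ ≤ n−2, if and only if there is a constant c ∈ ℝ such that p(x) = B_n(x)/n! + c for all x. -/
open Polynomial in
lemma bern_coeff_eq (n k : ℕ) (h : n ≤ k) :
    (Polynomial.bernoulli n).coeff k = if k = n then 1 else 0 := by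
  rw [Polynomial.bernoulli, Polynomial.finset_sum_coeff]
  simp_rw [Polynomial.coeff_monomial]
  rcases eq_or_lt_of_le h with rfl | hk
  · rw [if_pos rfl, Finset.sum_eq_single 0]
    · simp
    · intro i hi hi0
      rw [Finset.mem_range] at hi
      rw [if_neg (by omega)]
    · simp
  · rw [if_neg (by omega), Finset.sum_eq_zero]
    intro i hi
    rw [Finset.mem_range] at hi
    rw [if_neg (by omega)]

open Polynomial in
lemma iter_deriv_bern (n ℓ : ℕ) :
    ∃ a : ℚ, Polynomial.derivative^[ℓ] (Polynomial.bernoulli n) =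
      Polynomial.C a * Polynomial.bernoulli (n - ℓ) := by
  induction ℓ with
  | zero => exact ⟨1, by simp⟩
  | succ ℓ ih =>
    obtain ⟨a, ha⟩ := ih
    refine ⟨a * (n - ℓ : ℕ), ?_⟩
    rw [Function.iterate_succ_apply', ha, derivative_mul, derivative_C,
      Polynomial.derivative_bernoulli]
    have : n - (ℓ + 1) = n - ℓ - 1 := by omega
    rw [this, map_mul, Polynomial.C_eq_natCast]
    ring

open Polynomial in
lemma bern_eval_01 (m : ℕ) (h : m ≠ 1) :
    (Polynomial.bernoulli m).eval 0 = (Polynomial.bernoulli m).eval 1 := by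
  rw [Polynomial.bernoulli_eval_zero, Polynomial.bernoulli_eval_one,
    bernoulli_eq_bernoulli'_of_ne_one h]

/-- Let `n ≥ 2` and let `p` be a real polynomial of degree `n` with leading
coefficient `1/n!`. Then `p` is telescoping, i.e. `p^{(ℓ)}(0) = p^{(ℓ)}(1)` for all
`0 ≤ ℓ ≤ n − 2`, if and only if there is a constant `c` with `p(x) = B_n(x)/n! + c`. -/
theorem telescoping_iff_bernoulli (n : ℕ) (hn : 2 ≤ n)
    (p : Polynomial ℝ) (hdeg : p.natDegree = n)
    (hlead : p.leadingCoeff = 1 / (n.factorial : ℝ)) :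
    (∀ ℓ : ℕ, ℓ ≤ n - 2 →
        (Polynomial.derivative^[ℓ] p).eval (0 : ℝ) =
          (Polynomial.derivative^[ℓ] p).eval (1 : ℝ)) ↔
      ∃ c : ℝ, ∀ x : ℝ, p.eval x = bernPoly n x / (n.factorial : ℝ) + c := by
  classical
  set f := algebraMap ℚ ℝ with hf
  set B : Polynomial ℝ := (Polynomial.bernoulli n).map f with hB
  have hBx : ∀ x : ℝ, bernPoly n x = B.eval x := by
    intro x
    rw [bernPoly, Polynomial.aeval_def, hB, Polynomial.eval_map]
  have hfacne : (n.factorial : ℝ) ≠ 0 := Nat.cast_ne_zero.mpr n.factorial_ne_zero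
  -- iterated derivatives of B agree at 0 and 1
  have hBiter : ∀ ℓ : ℕ, ℓ ≤ n - 2 →
      (Polynomial.derivative^[ℓ] B).eval (0 : ℝ) =
        (Polynomial.derivative^[ℓ] B).eval (1 : ℝ) := by
    intro ℓ hℓ
    obtain ⟨a, ha⟩ := iter_deriv_bern n ℓ
    rw [hB, Polynomial.iterate_derivative_map, ha, Polynomial.eval_zero_map,
      Polynomial.eval_one_map]
    simp only [Polynomial.eval_mul, Polynomial.eval_C]
    rw [bern_eval_01 (n - ℓ) (by omega)]
  constructor
  · -- forward direction
    intro h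
    set q : Polynomial ℝ := p - Polynomial.C ((n.factorial : ℝ))⁻¹ * B with hq
    have hqdeg : q.natDegree ≤ n - 1 := by
      rw [Polynomial.natDegree_le_iff_coeff_eq_zero]
      intro N hN
      have hN' : n ≤ N := by omega
      rw [hq, Polynomial.coeff_sub, Polynomial.coeff_C_mul, hB, Polynomial.coeff_map,
        bern_coeff_eq n N hN']
      rcases eq_or_lt_of_le hN' with rfl | hlt
      · rw [if_pos rfl]
        have hpc : p.coeff n = p.leadingCoeff := by rw [Polynomial.leadingCoeff, hdeg]
        rw [hpc, hlead]
        simp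
      · rw [if_neg (by omega), Polynomial.coeff_eq_zero_of_natDegree_lt (by omega)]
        simp
    -- q is telescoping
    have hqtel : ∀ ℓ : ℕ, ℓ ≤ n - 2 →
        (Polynomial.derivative^[ℓ] q).eval (0 : ℝ) =
          (Polynomial.derivative^[ℓ] q).eval (1 : ℝ) := by
      intro ℓ hℓ
      simp only [hq, Polynomial.iterate_derivative_sub, Polynomial.iterate_derivative_C_mul,
        Polynomial.eval_sub, Polynomial.eval_mul, Polynomial.eval_C]
      rw [h ℓ hℓ, hBiter ℓ hℓ]
    -- q is constant
    have hq0 : q.natDegree = 0 := by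
      by_contra hq0
      set m := q.natDegree with hm
      have hm1 : 1 ≤ m := Nat.one_le_iff_ne_zero.mpr hq0
      set r := Polynomial.derivative^[m - 1] q with hr
      have hrdeg : r.natDegree ≤ 1 := by
        calc r.natDegree ≤ m - (m - 1) := Polynomial.natDegree_iterate_derivative q (m - 1)
        _ ≤ 1 := by omega
      have hrc1 : r.coeff 1 ≠ 0 := by
        rw [hr, Polynomial.coeff_iterate_derivative]
        have h1 : 1 + (m - 1) = m := by omega
        rw [h1]
        have hql : q.coeff m ≠ 0 := by
          rw [hm]
          exact Polynomial.leadingCoeff_ne_zero.mpr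
            (fun h0 => hq0 (by rw [hm, h0, Polynomial.natDegree_zero]))
        have hd : (m.descFactorial (m - 1)) ≠ 0 := fun h0 =>
          absurd (Nat.descFactorial_eq_zero_iff_lt.mp h0) (by omega)
        simp only [nsmul_eq_mul]
        exact mul_ne_zero (Nat.cast_ne_zero.mpr hd) hql
      have heq : r.eval (0 : ℝ) = r.eval 1 := hqtel (m - 1) (by omega)
      have h2 : r.natDegree < 2 := by omega
      rw [Polynomial.eval_eq_sum_range' h2, Polynomial.eval_eq_sum_range' h2] at heq
      simp [Finset.sum_range_succ] at heq
      exact hrc1 heq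
    have hqC : q = Polynomial.C (q.coeff 0) := Polynomial.eq_C_of_natDegree_eq_zero hq0
    refine ⟨q.coeff 0, fun x => ?_⟩
    have : p = Polynomial.C ((n.factorial : ℝ))⁻¹ * B + Polynomial.C (q.coeff 0) := by
      rw [← hqC, hq]; ring
    rw [this]
    simp [hBx x]
    field_simp
  · -- backward direction
    rintro ⟨c, hc⟩ ℓ hℓ
    have hpoly : p = Polynomial.C ((n.factorial : ℝ))⁻¹ * B + Polynomial.C c := by
      apply Polynomial.funext
      intro x
      rw [hc x, hBx x]
      simp
      field_simp
    have hpoly' : p - Polynomial.C ((n.factorial : ℝ))⁻¹ * B = Polynomial.C c := by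
      rw [hpoly]; ring
    have hsub : Polynomial.derivative^[ℓ] p -
        Polynomial.derivative^[ℓ] (Polynomial.C ((n.factorial : ℝ))⁻¹ * B) =
        Polynomial.derivative^[ℓ] (Polynomial.C c) := by
      rw [← Polynomial.iterate_derivative_sub, hpoly']
    have hp' : Polynomial.derivative^[ℓ] p =
        Polynomial.derivative^[ℓ] (Polynomial.C ((n.factorial : ℝ))⁻¹ * B) +
        Polynomial.derivative^[ℓ] (Polynomial.C c) := by
      rw [← hsub]; ring
    rw [hp']
    simp only [Polynomial.iterate_derivative_C_mul, Polynomial.eval_add, Polynomial.eval_mul,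
      Polynomial.eval_C]
    rw [hBiter ℓ hℓ]
    congr 1
    cases ℓ with
    | zero => simp
    | succ k => simp [Function.iterate_succ_apply]
end

section
/- Let n ≥ 2 be an integer, a < b real, N ≥ 1 an integer, h = (b−a)/N, c ∈ ℝ, and let f : [a,b] → ℝ be such that f^{(n-1)} is absolutely continuous on [a,b]. Then ∫_a^b f(x) dx = (h/2)(f(a)+f(b)) + h Σ_{k=1}^{N-1} f(a+kh) + Σ_{k=2}^{n} (B_k/k!) h^k ( f^{(k-1)}(a) − f^{(k-1)}(b) ) + (−1)^{n-1} c h^n ( f^{(n-1)}(b) − f^{(n-1)}(a) ) + E^N_{(a,b)}(B_n(x)/n! + c, f). -/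
set_option maxHeartbeats 1000000


open MeasureTheory intervalIntegral Finset

/-- The `n`-th Bernoulli number `B_n = B_n(0)`, as a real number. -/
noncomputable def bernNum (n : ℕ) : ℝ := (bernoulli n : ℝ)

/-- The composite error `E^N_{(a,b)}(p,f) = Σ_{k=0}^{N-1} E_{(a+kh, a+(k+1)h)}(p,f)`,
where `h = (b-a)/N`. -/
noncomputable def errEN (a b : ℝ) (N : ℕ) (n : ℕ) (p : ℝ → ℝ) (fn : ℝ → ℝ) : ℝ :=
  ∑ k ∈ Finset.range N,
    errE (a + k * ((b - a) / N)) (a + (k + 1) * ((b - a) / N)) n p fn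

/-! ### Auxiliary lemmas on Bernoulli polynomials -/

lemma bernPoly_eq_eval (n : ℕ) (x : ℝ) :
    bernPoly n x = ((Polynomial.bernoulli n).map (algebraMap ℚ ℝ)).eval x := by
  simp [bernPoly, Polynomial.aeval_def, Polynomial.eval_map]

lemma bernPoly_continuous (n : ℕ) : Continuous (bernPoly n) := by
  simp only [funext (bernPoly_eq_eval n)]
  exact Polynomial.continuous _

lemma bernPoly_hasDerivAt (m : ℕ) (x : ℝ) :
    HasDerivAt (bernPoly (m+1)) ((m+1) * bernPoly m x) x := by
  simp only [funext (bernPoly_eq_eval (m+1)), bernPoly_eq_eval]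
  have h := Polynomial.hasDerivAt ((Polynomial.bernoulli (m+1)).map (algebraMap ℚ ℝ)) x
  rw [Polynomial.derivative_map, Polynomial.derivative_bernoulli_add_one] at h
  refine h.congr_deriv ?_
  push_cast [Polynomial.map_mul]
  simp

lemma bernPoly_eval_zero (k : ℕ) : bernPoly k 0 = bernNum k := by
  have h : ((0:ℝ)) = algebraMap ℚ ℝ 0 := by simp
  rw [bernPoly, h, Polynomial.aeval_algebraMap_apply]
  simp [bernNum]

lemma bernPoly_eval_one (k : ℕ) (hk : k ≠ 1) : bernPoly k 1 = bernNum k := by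
  have h : ((1:ℝ)) = algebraMap ℚ ℝ 1 := by simp
  rw [bernPoly, h, Polynomial.aeval_algebraMap_apply]
  simp [bernNum, Polynomial.bernoulli_eval_one, bernoulli_eq_bernoulli'_of_ne_one hk]

lemma bernPoly_zero_eval (x : ℝ) : bernPoly 0 x = 1 := by simp [bernPoly]

lemma bernPoly_one_eval (x : ℝ) : bernPoly 1 x = x - 1/2 := by
  simp [bernPoly, Polynomial.bernoulli, Finset.sum_range_succ]
  ring

lemma bernNum_neg_one_pow (k : ℕ) (hk : k ≠ 1) : (-1:ℝ)^k * bernNum k = bernNum k := by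
  rcases Nat.even_or_odd k with he | ho
  · rw [he.neg_one_pow, one_mul]
  · have h : bernoulli k = 0 := by
      rw [bernoulli_eq_bernoulli'_of_ne_one hk]
      exact bernoulli'_eq_zero_of_odd ho (by rcases ho with ⟨j, rfl⟩; omega)
    simp [bernNum, h]

/-! ### Integration by parts against an absolutely continuous function -/

lemma ibp_prim {lo hi : ℝ} (hab : lo ≤ hi) {U U' w : ℝ → ℝ}
    (hU : ∀ x, HasDerivAt U (U' x) x) (hU' : Continuous U')
    (hw : IntervalIntegrable w volume lo hi) :
    ∫ t in lo..hi, U' t * (∫ s in lo..t, w s) =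
      U hi * (∫ s in lo..hi, w s) - ∫ s in lo..hi, U s * w s := by
  have hUc : Continuous U := continuous_iff_continuousAt.mpr fun x => (hU x).continuousAt
  set μ := volume.restrict (Set.Ioc lo hi) with hμ
  have hwi : IntegrableOn w (Set.Ioc lo hi) :=
    (intervalIntegrable_iff_integrableOn_Ioc_of_le hab).1 hw
  have hU'i : IntegrableOn U' (Set.Ioc lo hi) :=
    (hU'.intervalIntegrable lo hi).1
  have hUwi : IntegrableOn (fun s => U s * w s) (Set.Ioc lo hi) :=
    (intervalIntegrable_iff_integrableOn_Ioc_of_le hab).1 (hw.continuousOn_mul hUc.continuousOn)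
  have hS : MeasurableSet {p : ℝ × ℝ | p.2 ≤ p.1} := measurableSet_le measurable_snd measurable_fst
  have hbase : Integrable (fun p : ℝ × ℝ => U' p.1 * w p.2) (μ.prod μ) :=
    Integrable.mul_prod hU'i hwi
  have hFint : Integrable
      ({p : ℝ × ℝ | p.2 ≤ p.1}.indicator (fun p => U' p.1 * w p.2)) (μ.prod μ) :=
    hbase.indicator hS
  have swap :
      (∫ t, ∫ s, (if s ≤ t then U' t * w s else 0) ∂μ ∂μ)
        = ∫ s, ∫ t, (if s ≤ t then U' t * w s else 0) ∂μ ∂μ := by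
    have h := integral_integral_swap (f := fun t s => if s ≤ t then U' t * w s else 0)
      (μ := μ) (ν := μ) ?_
    · exact h
    · have he : (Function.uncurry fun t s => if s ≤ t then U' t * w s else 0)
          = {p : ℝ × ℝ | p.2 ≤ p.1}.indicator (fun p => U' p.1 * w p.2) := by
        funext p
        simp [Function.uncurry, Set.indicator_apply, Set.mem_setOf_eq]
      rw [he]; exact hFint
  have claim1 : ∀ t ∈ Set.Ioc lo hi,
      (∫ s, (if s ≤ t then U' t * w s else 0) ∂μ) = U' t * ∫ s in lo..t, w s := by
    intro t ht
    have h1 : (fun s => if s ≤ t then U' t * w s else 0)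
        = (Set.Iic t).indicator (fun s => U' t * w s) := by
      funext s; simp [Set.indicator_apply]
    rw [h1, MeasureTheory.integral_indicator measurableSet_Iic, hμ,
      Measure.restrict_restrict measurableSet_Iic]
    have h2 : Set.Iic t ∩ Set.Ioc lo hi = Set.Ioc lo t := by
      rw [Set.inter_comm, Set.Ioc_inter_Iic, min_eq_right ht.2]
    rw [h2, intervalIntegral.integral_of_le (le_of_lt ht.1), MeasureTheory.integral_const_mul]
  have claim2 : ∀ s ∈ Set.Ioc lo hi,
      (∫ t, (if s ≤ t then U' t * w s else 0) ∂μ) = (U hi - U s) * w s := by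
    intro s hs
    have h1 : (fun t => if s ≤ t then U' t * w s else 0)
        = (Set.Ici s).indicator (fun t => U' t * w s) := by
      funext t; simp [Set.indicator_apply]
    rw [h1, MeasureTheory.integral_indicator measurableSet_Ici, hμ,
      Measure.restrict_restrict measurableSet_Ici]
    have h2 : Set.Ici s ∩ Set.Ioc lo hi = Set.Icc s hi := by
      ext x
      simp only [Set.mem_inter_iff, Set.mem_Ici, Set.mem_Ioc, Set.mem_Icc]
      exact ⟨fun h => ⟨h.1, h.2.2⟩, fun h => ⟨h.1, lt_of_lt_of_le hs.1 h.1, h.2⟩⟩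
    rw [h2, MeasureTheory.integral_mul_const, integral_Icc_eq_integral_Ioc,
      ← intervalIntegral.integral_of_le hs.2,
      integral_eq_sub_of_hasDerivAt (fun x _ => hU x) (hU'.intervalIntegrable s hi)]
  calc ∫ t in lo..hi, U' t * (∫ s in lo..t, w s)
      = ∫ t, ∫ s, (if s ≤ t then U' t * w s else 0) ∂μ ∂μ := by
        rw [intervalIntegral.integral_of_le hab]
        exact (setIntegral_congr_fun measurableSet_Ioc (fun t ht => (claim1 t ht).symm))
    _ = ∫ s, ∫ t, (if s ≤ t then U' t * w s else 0) ∂μ ∂μ := swap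
    _ = ∫ s, (U hi - U s) * w s ∂μ :=
        setIntegral_congr_fun measurableSet_Ioc (fun s hs => claim2 s hs)
    _ = U hi * (∫ s in lo..hi, w s) - ∫ s in lo..hi, U s * w s := by
        rw [intervalIntegral.integral_of_le hab, intervalIntegral.integral_of_le hab]
        simp_rw [sub_mul]
        rw [integral_sub (hwi.const_mul (U hi)) hUwi, MeasureTheory.integral_const_mul]

lemma ibp_AC {lo hi : ℝ} (hab : lo ≤ hi) {U U' G w : ℝ → ℝ}
    (hU : ∀ x, HasDerivAt U (U' x) x) (hU' : Continuous U')
    (hw : IntervalIntegrable w volume lo hi)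
    (hG : ∀ x ∈ Set.Icc lo hi, G x = G lo + ∫ t in lo..x, w t) :
    ∫ t in lo..hi, U t * w t = U hi * G hi - U lo * G lo - ∫ t in lo..hi, U' t * G t := by
  have hUc : Continuous U := continuous_iff_continuousAt.mpr fun x => (hU x).continuousAt
  have hVcont : ContinuousOn (fun t => ∫ s in lo..t, w s) (Set.Icc lo hi) := by
    have h := intervalIntegral.continuousOn_primitive_interval
      (f := w) (μ := volume) (a := lo) (b := hi) ?_
    · rwa [Set.uIcc_of_le hab] at h
    · rw [Set.uIcc_of_le hab]
      exact (intervalIntegrable_iff_integrableOn_Icc_of_le hab).1 hw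
  have int1 : IntervalIntegrable (fun t => U' t * G lo) volume lo hi :=
    (hU'.intervalIntegrable _ _).mul_const _
  have int2 : IntervalIntegrable (fun t => U' t * ∫ s in lo..t, w s) volume lo hi := by
    apply ContinuousOn.intervalIntegrable
    rw [Set.uIcc_of_le hab]
    exact hU'.continuousOn.mul hVcont
  have hU'int : ∫ t in lo..hi, U' t = U hi - U lo :=
    integral_eq_sub_of_hasDerivAt (fun x _ => hU x) (hU'.intervalIntegrable _ _)
  have hGc : ∫ t in lo..hi, U' t * G t
      = G lo * (U hi - U lo) + (U hi * (∫ s in lo..hi, w s) - ∫ s in lo..hi, U s * w s) := by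
    have e1 : ∫ t in lo..hi, U' t * G t
        = ∫ t in lo..hi, (U' t * G lo + U' t * ∫ s in lo..t, w s) :=
      intervalIntegral.integral_congr (fun t ht => by
        rw [Set.uIcc_of_le hab] at ht; rw [hG t ht]; ring)
    rw [e1, intervalIntegral.integral_add int1 int2, ibp_prim hab hU hU' hw,
      intervalIntegral.integral_mul_const, hU'int]
    ring
  have hW : G hi = G lo + ∫ s in lo..hi, w s := hG hi ⟨hab, le_rfl⟩
  rw [hGc, hW]; ring

/-! ### The single-interval rule -/

lemma single_interval_rule (n : ℕ) (hn : 2 ≤ n) (a b : ℝ) (hab : a < b)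
    (f : ℝ → ℝ) (hreg : ContDiffOn ℝ (n - 1 : ℕ) f (Set.Icc a b))
    (hAC : ACOn (iteratedDerivWithin (n - 1) f (Set.Icc a b))
      (iteratedDerivWithin n f (Set.Icc a b)) a b)
    (α β : ℝ) (ha : a ≤ α) (hαβ : α < β) (hb : β ≤ b) (c : ℝ) :
    ∫ t in α..β, f t =
      (β - α) / 2 * (f α + f β)
        + ∑ k ∈ Finset.Icc 2 n, bernNum k / (k.factorial : ℝ) * (β - α) ^ k *
            (iteratedDerivWithin (k - 1) f (Set.Icc a b) α -
              iteratedDerivWithin (k - 1) f (Set.Icc a b) β)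
        + (-1 : ℝ) ^ (n - 1) * c * (β - α) ^ n *
            (iteratedDerivWithin (n - 1) f (Set.Icc a b) β -
              iteratedDerivWithin (n - 1) f (Set.Icc a b) α)
        + errE α β n (fun x => bernPoly n x / (n.factorial : ℝ) + c)
            (iteratedDerivWithin n f (Set.Icc a b)) := by
  set s : Set ℝ := Set.Icc a b with hs_def
  set g : ℕ → ℝ → ℝ := fun m => iteratedDerivWithin m f s with hg_def
  have hsu : UniqueDiffOn ℝ s := uniqueDiffOn_Icc hab
  have hd : (0:ℝ) < β - α := sub_pos.mpr hαβ
  have hdne : β - α ≠ 0 := ne_of_gt hd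
  have hsub : Set.Icc α β ⊆ s := Set.Icc_subset_Icc ha hb
  -- continuity of g m for m ≤ n - 1
  have hcont : ∀ m : ℕ, m ≤ n - 1 → ContinuousOn (g m) s := fun m hm =>
    hreg.continuousOn_iteratedDerivWithin (by exact_mod_cast hm) hsu
  -- absolute continuity of each level on [a,b]
  have hACt : ∀ m : ℕ, m + 1 ≤ n →
      IntervalIntegrable (g (m+1)) volume a b ∧
        ∀ x ∈ s, g m x = g m a + ∫ t in a..x, g (m+1) t := by
    intro m hm
    rcases eq_or_lt_of_le hm with he | hlt
    · have h1 : n - 1 = m := by omega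
      refine ⟨by rw [he]; exact hAC.1, fun x hx => ?_⟩
      have h2 := hAC.2 x hx
      rw [h1] at h2
      rw [← he] at h2
      exact h2
    · have hm1 : m + 1 ≤ n - 1 := by omega
      have hc1 : ContinuousOn (g (m+1)) s := hcont _ hm1
      have hint : IntervalIntegrable (g (m+1)) volume a b := by
        apply ContinuousOn.intervalIntegrable
        rw [Set.uIcc_of_le hab.le]
        exact hc1
      have hder : ∀ x ∈ s, HasDerivWithinAt (g m) (g (m+1) x) s x := by
        intro x hx
        have hdiff : DifferentiableOn ℝ (g m) s :=
          hreg.differentiableOn_iteratedDerivWithin (by exact_mod_cast (by omega : m < n - 1)) hsu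
        have h3 := (hdiff x hx).hasDerivWithinAt
        have h4 : g (m+1) x = derivWithin (g m) s x := congrFun iteratedDerivWithin_succ x
        rw [h4]
        exact h3
      refine ⟨hint, fun x hx => ?_⟩
      have hax : a ≤ x := hx.1
      have h5 : ∫ t in a..x, g (m+1) t = g m x - g m a := by
        apply integral_eq_sub_of_hasDeriv_right_of_le hax
        · exact (hcont m (by omega)).mono (Set.Icc_subset_Icc_right hx.2)
        · intro t ht
          have hts : t ∈ s := ⟨le_of_lt ht.1, le_trans (le_of_lt ht.2) hx.2⟩
          exact (((hder t hts).hasDerivAt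
            (Icc_mem_nhds ht.1 (lt_of_lt_of_le ht.2 hx.2))).hasDerivWithinAt)
        · exact hint.mono_set
            (by rw [Set.uIcc_of_le hax, Set.uIcc_of_le hab.le]
                exact Set.Icc_subset_Icc_right hx.2)
      rw [h5]; ring
  -- absolute continuity on [α,β]
  have hACt' : ∀ m : ℕ, m + 1 ≤ n →
      IntervalIntegrable (g (m+1)) volume α β ∧
        ∀ x ∈ Set.Icc α β, g m x = g m α + ∫ t in α..x, g (m+1) t := by
    intro m hm
    obtain ⟨hint, hfor⟩ := hACt m hm
    have hmono : ∀ u v : ℝ, a ≤ u → u ≤ v → v ≤ b →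
        IntervalIntegrable (g (m+1)) volume u v := by
      intro u v h1 h2 h3
      exact hint.mono_set (by
        rw [Set.uIcc_of_le h2, Set.uIcc_of_le hab.le]
        exact Set.Icc_subset_Icc h1 h3)
    refine ⟨hmono α β ha hαβ.le hb, fun x hx => ?_⟩
    have hxs : x ∈ s := hsub hx
    have e1 := hfor x hxs
    have e2 := hfor α (hsub ⟨le_refl α, hαβ.le⟩)
    have e4 : (∫ t in a..x, g (m+1) t) - (∫ t in a..α, g (m+1) t)
        = ∫ t in α..x, g (m+1) t :=
      intervalIntegral.integral_interval_sub_left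
        (hmono a x (le_refl a) (le_trans ha hx.1) (le_trans hx.2 hb))
        (hmono a α (le_refl a) ha (le_trans hαβ.le hb))
    rw [e1, e2]
    linarith [e4]
  -- points of the affine map stay in [α,β]
  have haff : ∀ x ∈ Set.Icc (0:ℝ) 1, α + (β - α) * x ∈ Set.Icc α β := by
    intro x hx
    constructor
    · nlinarith [hx.1, hx.2]
    · nlinarith [hx.1, hx.2]
  -- integrability in the x-variable
  have hcomp : ∀ m : ℕ, m + 1 ≤ n →
      IntervalIntegrable (fun x => g (m+1) (α + (β - α) * x)) volume 0 1 := by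
    intro m hm
    have h1 := (hACt' m hm).1
    have h2 := h1.comp_add_left α
    have h3 := h2.comp_mul_left (c := β - α)
    simpa [sub_self, zero_div, div_self hdne] using h3
  -- change of variables
  have hcv : ∀ (w : ℝ → ℝ) (x₀ : ℝ),
      (β - α) * ∫ x in (0:ℝ)..x₀, w (α + (β - α) * x)
        = ∫ t in α..(α + (β - α) * x₀), w t := by
    intro w x₀
    rw [intervalIntegral.integral_comp_add_mul w hdne α, smul_eq_mul, ← mul_assoc,
      mul_inv_cancel₀ hdne, one_mul, mul_zero, add_zero]
  -- absolute continuity in the x-variable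
  have hACx : ∀ m : ℕ, m + 1 ≤ n → ∀ x ∈ Set.Icc (0:ℝ) 1,
      g m (α + (β - α) * x)
        = g m α + ∫ t in (0:ℝ)..x, (β - α) * g (m+1) (α + (β - α) * t) := by
    intro m hm x hx
    have h1 := (hACt' m hm).2 _ (haff x hx)
    rw [h1]
    congr 1
    rw [intervalIntegral.integral_const_mul, hcv]
  -- the sequence of integrals
  set T : ℕ → ℝ :=
    fun m => ∫ x in (0:ℝ)..1, bernPoly m x / (m.factorial : ℝ) * g m (α + (β - α) * x)
    with hT_def
  have hTm_eq : ∀ m : ℕ, T m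
      = ∫ x in (0:ℝ)..1, bernPoly m x / (m.factorial : ℝ) * g m (α + (β - α) * x) :=
    fun m => rfl
  -- integration by parts at each level
  have stepT : ∀ m : ℕ, m + 1 ≤ n →
      (β - α) * T (m+1)
        = bernPoly (m+1) 1 / ((m+1).factorial : ℝ) * g m β
          - bernNum (m+1) / ((m+1).factorial : ℝ) * g m α - T m := by
    intro m hm
    have hfactsucc : (((m+1).factorial : ℝ)) = (m+1) * (m.factorial : ℝ) := by
      rw [Nat.factorial_succ]; push_cast; ring
    have hfacne : (m.factorial : ℝ) ≠ 0 := Nat.cast_ne_zero.mpr (Nat.factorial_ne_zero m)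
    have hU : ∀ x, HasDerivAt (fun y => bernPoly (m+1) y / ((m+1).factorial : ℝ))
        (bernPoly m x / (m.factorial : ℝ)) x := by
      intro x
      have h0 := (bernPoly_hasDerivAt m x).div_const (((m+1).factorial : ℝ))
      refine h0.congr_deriv ?_
      rw [hfactsucc]
      field_simp
    have hG : ∀ x ∈ Set.Icc (0:ℝ) 1,
        g m (α + (β - α) * x)
          = g m (α + (β - α) * 0) + ∫ t in (0:ℝ)..x, (β - α) * g (m+1) (α + (β - α) * t) := by
      intro x hx
      rw [show α + (β - α) * (0:ℝ) = α by ring]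
      exact hACx m hm x hx
    have h := ibp_AC (zero_le_one) hU ((bernPoly_continuous m).div_const _)
      ((hcomp m hm).const_mul (β - α)) hG
    have hL : ∫ t in (0:ℝ)..1, bernPoly (m+1) t / ((m+1).factorial : ℝ) *
          ((β - α) * g (m+1) (α + (β - α) * t))
        = (β - α) * T (m+1) := by
      rw [hTm_eq]
      rw [← intervalIntegral.integral_const_mul]
      apply intervalIntegral.integral_congr
      intro x _
      ring
    rw [hL] at h
    rw [h, show α + (β - α) * (1:ℝ) = β by ring, show α + (β - α) * (0:ℝ) = α by ring,
      bernPoly_eval_zero]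
  -- main induction
  have main : ∀ m : ℕ, 1 ≤ m → m ≤ n →
      ∫ t in α..β, f t = (β - α) / 2 * (f α + f β)
        + (∑ k ∈ Finset.Icc 2 m, bernNum k / (k.factorial : ℝ) * (β - α) ^ k *
            (g (k-1) α - g (k-1) β))
        + (-1:ℝ)^m * (β - α)^(m+1) * T m := by
    intro m
    induction m with
    | zero => intro h; omega
    | succ m ih =>
      intro _ hmn
      rcases Nat.eq_zero_or_pos m with rfl | hm1
      · -- base case m = 1
        have h0 := stepT 0 (by omega)
        have hT0 : T 0 = (β - α)⁻¹ * ∫ t in α..β, f t := by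
          rw [hTm_eq]
          have e1 : ∀ x : ℝ, bernPoly 0 x / ((Nat.factorial 0 : ℕ) : ℝ) * g 0 (α + (β - α) * x)
              = f (α + (β - α) * x) := by
            intro x
            rw [hg_def]
            simp [bernPoly_zero_eval, iteratedDerivWithin_zero]
          rw [intervalIntegral.integral_congr (fun x _ => e1 x)]
          have := hcv f 1
          rw [show α + (β - α) * (1:ℝ) = β by ring] at this
          rw [← this, ← mul_assoc, inv_mul_cancel₀ hdne, one_mul]
        have hB11 : bernPoly 1 1 = 1/2 := by rw [bernPoly_one_eval]; norm_num
        have hBn1 : bernNum 1 = -(1/2) := by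
          rw [bernNum, bernoulli_one]; push_cast; norm_num
        have hg0 : g 0 = f := by rw [hg_def]; exact iteratedDerivWithin_zero
        rw [hB11, hBn1, hg0] at h0
        simp only [show (0+1 : ℕ) = 1 from rfl, Nat.factorial_one, Nat.cast_one] at h0
        have : Finset.Icc 2 1 = (∅ : Finset ℕ) := by decide
        rw [show (0:ℕ)+1 = 1 by rfl] at *
        rw [this, Finset.sum_empty]
        rw [hT0] at h0
        have : ∫ t in α..β, f t
            = (β - α) / 2 * (f α + f β) + (-1:ℝ)^1 * (β - α)^(1+1) * T 1 := by
          have h2 : (β - α) * ((β - α)⁻¹ * ∫ t in α..β, f t) = ∫ t in α..β, f t := by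
            rw [← mul_assoc, mul_inv_cancel₀ hdne, one_mul]
          nlinarith [h0, h2]
        linarith [this]
      · -- inductive step
        have hmn' : m ≤ n := by omega
        have ihm := ih hm1 hmn'
        have hstep := stepT m (by omega)
        have hb1 : bernPoly (m+1) 1 = bernNum (m+1) := bernPoly_eval_one (m+1) (by omega)
        rw [hb1] at hstep
        have hbn' : (-1:ℝ)^(m+1) * bernNum (m+1) = bernNum (m+1) :=
          bernNum_neg_one_pow (m+1) (by omega)
        rw [Finset.sum_Icc_succ_top (by omega : 2 ≤ m + 1)]
        rw [ihm]
        have hTm : T m = bernNum (m+1) / (((m+1).factorial : ℕ) : ℝ) * g m β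
            - bernNum (m+1) / (((m+1).factorial : ℕ) : ℝ) * g m α - (β - α) * T (m+1) := by
          linarith [hstep]
        simp only [Nat.add_sub_cancel]
        have goal : (-1:ℝ)^m * (β - α)^(m+1) * T m
            = bernNum (m+1) / (((m+1).factorial : ℕ) : ℝ) * (β - α)^(m+1) *
                (g m α - g m β)
              + (-1:ℝ)^(m+1) * (β - α)^(m+1+1) * T (m+1) := by
          have hpow : (-1:ℝ)^(m+1) = -(-1:ℝ)^m := by rw [pow_succ]; ring
          have hbn'' : (-1:ℝ)^m * bernNum (m+1) = - bernNum (m+1) := by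
            rw [hpow] at hbn'; linarith [hbn']
          calc (-1:ℝ)^m * (β - α)^(m+1) * T m
              = (-1:ℝ)^m * (β - α)^(m+1) *
                  (bernNum (m+1) / (((m+1).factorial : ℕ) : ℝ) * (g m β - g m α))
                - (-1:ℝ)^m * (β - α)^(m+1) * ((β - α) * T (m+1)) := by rw [hTm]; ring
            _ = ((-1:ℝ)^m * bernNum (m+1)) * (β - α)^(m+1) *
                  ((g m β - g m α) / (((m+1).factorial : ℕ) : ℝ))
                + (-1:ℝ)^(m+1) * (β - α)^(m+1+1) * T (m+1) := by
                rw [hpow]; ring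
            _ = bernNum (m+1) / (((m+1).factorial : ℕ) : ℝ) * (β - α)^(m+1) *
                  (g m α - g m β)
                + (-1:ℝ)^(m+1) * (β - α)^(m+1+1) * T (m+1) := by
                rw [hbn'']; ring
        rw [goal]; ring
  -- apply at m = n and identify the error term
  have hmain := main n (by omega) (le_refl n)
  -- the error term
  have hn1 : n - 1 + 1 = n := by omega
  have hAint : IntervalIntegrable (fun x => g n (α + (β - α) * x)) volume 0 1 := by
    have h := hcomp (n-1) (by omega)
    rwa [hn1] at h
  have hsplit : ∫ x in (0:ℝ)..1,
        (bernPoly n x / (n.factorial : ℝ) + c) * g n (α + (β - α) * x)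
      = T n + c * ∫ x in (0:ℝ)..1, g n (α + (β - α) * x) := by
    have i1 : IntervalIntegrable
        (fun x => bernPoly n x / (n.factorial : ℝ) * g n (α + (β - α) * x)) volume 0 1 :=
      hAint.continuousOn_mul ((bernPoly_continuous n).div_const _).continuousOn
    have i2 : IntervalIntegrable (fun x => c * g n (α + (β - α) * x)) volume 0 1 :=
      hAint.const_mul c
    have e : ∀ x : ℝ, (bernPoly n x / (n.factorial : ℝ) + c) * g n (α + (β - α) * x)
        = bernPoly n x / (n.factorial : ℝ) * g n (α + (β - α) * x)
          + c * g n (α + (β - α) * x) := fun x => by ring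
    rw [intervalIntegral.integral_congr (fun x _ => e x),
      intervalIntegral.integral_add i1 i2, intervalIntegral.integral_const_mul]
  have hlast : (β - α) * ∫ x in (0:ℝ)..1, g n (α + (β - α) * x)
      = g (n-1) β - g (n-1) α := by
    have h := hACx (n-1) (by omega) 1 ⟨zero_le_one, le_refl 1⟩
    rw [hn1] at h
    rw [show α + (β - α) * (1:ℝ) = β by ring] at h
    rw [intervalIntegral.integral_const_mul] at h
    linarith [h]
  have herr : errE α β n (fun x => bernPoly n x / (n.factorial : ℝ) + c) (g n)
      = (-1:ℝ)^n * (β - α)^(n+1) * T n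
        + (-1:ℝ)^n * c * (β - α)^n * (g (n-1) β - g (n-1) α) := by
    rw [errE, hsplit, ← hlast]
    have : (β - α)^(n+1) = (β - α)^n * (β - α) := by rw [pow_succ]
    rw [this]
    ring
  have hsgn : (-1:ℝ)^n = -(-1:ℝ)^(n-1) := by
    rw [show n = (n-1)+1 by omega, pow_succ]
    rw [show (n-1)+1-1 = n-1 by omega]
    ring
  rw [hmain]
  rw [herr, hsgn]
  ring

/-- The composite quadrature rule generated by `B_n(x)/n! + c`. -/
theorem composite_telescoping_rule (n : ℕ) (hn : 2 ≤ n) (a b : ℝ) (hab : a < b)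
    (N : ℕ) (hN : 1 ≤ N) (c : ℝ)
    (f : ℝ → ℝ) (hreg : ContDiffOn ℝ (n - 1 : ℕ) f (Set.Icc a b))
    (hAC : ACOn (iteratedDerivWithin (n - 1) f (Set.Icc a b))
      (iteratedDerivWithin n f (Set.Icc a b)) a b) :
    ∫ x in a..b, f x =
      ((b - a) / N) / 2 * (f a + f b)
        + ((b - a) / N) * ∑ k ∈ Finset.Icc 1 (N - 1), f (a + k * ((b - a) / N))
        + ∑ k ∈ Finset.Icc 2 n, bernNum k / (k.factorial : ℝ) * ((b - a) / N) ^ k *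
            (iteratedDerivWithin (k - 1) f (Set.Icc a b) a -
              iteratedDerivWithin (k - 1) f (Set.Icc a b) b)
        + (-1 : ℝ) ^ (n - 1) * c * ((b - a) / N) ^ n *
            (iteratedDerivWithin (n - 1) f (Set.Icc a b) b -
              iteratedDerivWithin (n - 1) f (Set.Icc a b) a)
        + errEN a b N n (fun x => bernPoly n x / (n.factorial : ℝ) + c)
            (iteratedDerivWithin n f (Set.Icc a b)) := by
  set s : Set ℝ := Set.Icc a b with hs_def
  set h : ℝ := (b - a) / N with hh_def
  have hNne : (N:ℝ) ≠ 0 := Nat.cast_ne_zero.mpr (by omega)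
  have hNpos : (0:ℝ) < N := Nat.cast_pos.mpr (by omega)
  have hhpos : 0 < h := by rw [hh_def]; exact div_pos (sub_pos.mpr hab) hNpos
  have hNb : a + (N:ℝ) * h = b := by rw [hh_def]; field_simp; ring
  have hmem : ∀ j : ℕ, j ≤ N → a + (j:ℝ)*h ∈ Set.Icc a b := by
    intro j hj
    have hj' : (j:ℝ) ≤ N := Nat.cast_le.mpr hj
    constructor
    · nlinarith [mul_nonneg (Nat.cast_nonneg (α := ℝ) j) hhpos.le]
    · nlinarith [mul_nonneg (sub_nonneg.mpr hj') hhpos.le, hNb]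
  have hfc : ContinuousOn f s := hreg.continuousOn
  have hcast : ∀ j : ℕ, a + ((j+1 : ℕ) : ℝ) * h = a + ((j:ℝ)+1)*h := by
    intro j; push_cast; ring
  -- splitting the integral
  have hsum : ∫ x in a..b, f x
      = ∑ j ∈ Finset.range N, ∫ t in (a + (j:ℝ)*h)..(a + ((j:ℝ)+1)*h), f t := by
    have hint : ∀ k : ℕ, k < N →
        IntervalIntegrable f volume (a + (k:ℝ)*h) (a + ((k+1:ℕ):ℝ)*h) := by
      intro k hk
      apply ContinuousOn.intervalIntegrable
      have hle : a + (k:ℝ)*h ≤ a + ((k+1:ℕ):ℝ)*h := by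
        rw [hcast]; nlinarith [hhpos]
      rw [Set.uIcc_of_le hle]
      exact hfc.mono (Set.Icc_subset_Icc (hmem k (by omega)).1 (hmem (k+1) (by omega)).2)
    have hadj := intervalIntegral.sum_integral_adjacent_intervals
      (a := fun j : ℕ => a + (j:ℝ)*h) (μ := volume) (f := f) hint
    simp only [Nat.cast_zero, zero_mul, add_zero, hNb] at hadj
    rw [← hadj]
    exact Finset.sum_congr rfl (fun j _ => by rw [hcast j])
  -- per-interval rule
  have key' : ∀ j ∈ Finset.range N,
      (∫ t in (a + (j:ℝ)*h)..(a + ((j:ℝ)+1)*h), f t)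
        = h / 2 * (f (a + (j:ℝ)*h) + f (a + ((j:ℝ)+1)*h))
          + (∑ k ∈ Finset.Icc 2 n, bernNum k / (k.factorial : ℝ) * h ^ k *
              (iteratedDerivWithin (k-1) f s (a + (j:ℝ)*h)
                - iteratedDerivWithin (k-1) f s (a + ((j:ℝ)+1)*h)))
          + (-1:ℝ)^(n-1) * c * h^n *
              (iteratedDerivWithin (n-1) f s (a + ((j:ℝ)+1)*h)
                - iteratedDerivWithin (n-1) f s (a + (j:ℝ)*h))
          + errE (a + (j:ℝ)*h) (a + ((j:ℝ)+1)*h) n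
              (fun x => bernPoly n x / (n.factorial : ℝ) + c) (iteratedDerivWithin n f s) := by
    intro j hj
    rw [Finset.mem_range] at hj
    have hj1 : ((j:ℝ)+1) ≤ N := by exact_mod_cast Nat.succ_le_of_lt hj
    have hα : a ≤ a + (j:ℝ)*h := by
      nlinarith [mul_nonneg (Nat.cast_nonneg (α := ℝ) j) hhpos.le]
    have hβ : a + ((j:ℝ)+1)*h ≤ b := by
      nlinarith [mul_nonneg (sub_nonneg.mpr hj1) hhpos.le, hNb]
    have hlt : a + (j:ℝ)*h < a + ((j:ℝ)+1)*h := by nlinarith [hhpos]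
    have K := single_interval_rule n hn a b hab f hreg hAC _ _ hα hlt hβ c
    rw [show a + ((j:ℝ)+1)*h - (a + (j:ℝ)*h) = h by ring] at K
    exact K
  -- telescoping helpers
  have tele' : ∀ (w : ℕ → ℝ), ∑ j ∈ Finset.range N, (w j - w (j+1)) = w 0 - w N :=
    fun w => Finset.sum_range_sub' w N
  have tele : ∀ (w : ℕ → ℝ), ∑ j ∈ Finset.range N, (w (j+1) - w j) = w N - w 0 :=
    fun w => Finset.sum_range_sub w N
  have hIcc1 : Finset.range N = insert 0 (Finset.Icc 1 (N-1)) := by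
    ext j; simp only [Finset.mem_range, Finset.mem_insert, Finset.mem_Icc]; omega
  have h0notin : (0:ℕ) ∉ Finset.Icc 1 (N-1) := by simp
  have hIcc2 : Finset.Icc 1 N = insert N (Finset.Icc 1 (N-1)) := by
    ext j; simp only [Finset.mem_insert, Finset.mem_Icc]; omega
  have hNnotin : N ∉ Finset.Icc 1 (N-1) := by
    simp only [Finset.mem_Icc]; omega
  have e1 : ∀ u : ℕ → ℝ, ∑ j ∈ Finset.range N, u j
      = u 0 + ∑ k ∈ Finset.Icc 1 (N-1), u k := by
    intro u; rw [hIcc1, Finset.sum_insert h0notin]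
  have e2 : ∀ u : ℕ → ℝ, ∑ j ∈ Finset.range N, u (j+1)
      = (∑ k ∈ Finset.Icc 1 (N-1), u k) + u N := by
    intro u
    have h3 : ∑ j ∈ Finset.range N, u (j+1) = ∑ j ∈ Finset.Ico 1 (N+1), u j := by
      rw [Finset.sum_Ico_eq_sum_range]
      simp only [Nat.add_sub_cancel]
      exact Finset.sum_congr rfl (fun i _ => by rw [Nat.add_comm])
    rw [h3, Finset.Ico_add_one_right_eq_Icc, hIcc2, Finset.sum_insert hNnotin]
    ring
  -- the four sums
  have S1 : ∑ j ∈ Finset.range N, h / 2 * (f (a + (j:ℝ)*h) + f (a + ((j:ℝ)+1)*h))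
      = h / 2 * (f a + f b) + h * ∑ k ∈ Finset.Icc 1 (N-1), f (a + (k:ℝ)*h) := by
    have hsummand : ∀ j : ℕ, h/2 * (f (a + (j:ℝ)*h) + f (a + ((j:ℝ)+1)*h))
        = (fun i : ℕ => h/2 * f (a + (i:ℝ)*h)) j
          + (fun i : ℕ => h/2 * f (a + (i:ℝ)*h)) (j+1) := by
      intro j; push_cast; ring
    rw [Finset.sum_congr rfl (fun j _ => hsummand j), Finset.sum_add_distrib,
      e1 (fun i : ℕ => h/2 * f (a + (i:ℝ)*h)), e2 (fun i : ℕ => h/2 * f (a + (i:ℝ)*h))]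
    simp only [Nat.cast_zero, zero_mul, add_zero, hNb]
    rw [← Finset.mul_sum]
    ring
  have S2 : ∑ j ∈ Finset.range N, (∑ k ∈ Finset.Icc 2 n,
        bernNum k / (k.factorial : ℝ) * h ^ k *
          (iteratedDerivWithin (k-1) f s (a + (j:ℝ)*h)
            - iteratedDerivWithin (k-1) f s (a + ((j:ℝ)+1)*h)))
      = ∑ k ∈ Finset.Icc 2 n, bernNum k / (k.factorial : ℝ) * h ^ k *
          (iteratedDerivWithin (k-1) f s a - iteratedDerivWithin (k-1) f s b) := by
    rw [Finset.sum_comm]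
    apply Finset.sum_congr rfl
    intro k _
    have hsummand : ∀ j : ℕ, bernNum k / (k.factorial : ℝ) * h ^ k *
          (iteratedDerivWithin (k-1) f s (a + (j:ℝ)*h)
            - iteratedDerivWithin (k-1) f s (a + ((j:ℝ)+1)*h))
        = bernNum k / (k.factorial : ℝ) * h ^ k *
            ((fun i : ℕ => iteratedDerivWithin (k-1) f s (a + (i:ℝ)*h)) j
              - (fun i : ℕ => iteratedDerivWithin (k-1) f s (a + (i:ℝ)*h)) (j+1)) := by
      intro j
      simp only []
      rw [hcast j]
    rw [Finset.sum_congr rfl (fun j _ => hsummand j), ← Finset.mul_sum,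
      tele' (fun i : ℕ => iteratedDerivWithin (k-1) f s (a + (i:ℝ)*h))]
    simp only [Nat.cast_zero, zero_mul, add_zero, hNb]
  have S3 : ∑ j ∈ Finset.range N, (-1:ℝ)^(n-1) * c * h^n *
        (iteratedDerivWithin (n-1) f s (a + ((j:ℝ)+1)*h)
          - iteratedDerivWithin (n-1) f s (a + (j:ℝ)*h))
      = (-1:ℝ)^(n-1) * c * h^n *
          (iteratedDerivWithin (n-1) f s b - iteratedDerivWithin (n-1) f s a) := by
    have hsummand : ∀ j : ℕ, (-1:ℝ)^(n-1) * c * h^n *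
          (iteratedDerivWithin (n-1) f s (a + ((j:ℝ)+1)*h)
            - iteratedDerivWithin (n-1) f s (a + (j:ℝ)*h))
        = (-1:ℝ)^(n-1) * c * h^n *
            ((fun i : ℕ => iteratedDerivWithin (n-1) f s (a + (i:ℝ)*h)) (j+1)
              - (fun i : ℕ => iteratedDerivWithin (n-1) f s (a + (i:ℝ)*h)) j) := by
      intro j
      simp only []
      rw [hcast j]
    rw [Finset.sum_congr rfl (fun j _ => hsummand j), ← Finset.mul_sum,
      tele (fun i : ℕ => iteratedDerivWithin (n-1) f s (a + (i:ℝ)*h))]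
    simp only [Nat.cast_zero, zero_mul, add_zero, hNb]
  have S4 : ∑ j ∈ Finset.range N, errE (a + (j:ℝ)*h) (a + ((j:ℝ)+1)*h) n
        (fun x => bernPoly n x / (n.factorial : ℝ) + c) (iteratedDerivWithin n f s)
      = errEN a b N n (fun x => bernPoly n x / (n.factorial : ℝ) + c)
          (iteratedDerivWithin n f s) := by
    rw [errEN]
  rw [hsum, Finset.sum_congr rfl key', Finset.sum_add_distrib, Finset.sum_add_distrib,
    Finset.sum_add_distrib, S1, S2, S3, S4]
end

section
/- Let n ≥ 1 be an odd integer and let 1 ≤ r < ∞. Then for every constant c ∈ ℝ, ‖p_n‖_r ≤ ‖p_n + c‖_r; moreover the inequality is strict for nonzero c when r > 1. -/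
open MeasureTheory intervalIntegral

/-- `p_n(x) = B_n(x)/n!`. -/
noncomputable def pB (n : ℕ) (x : ℝ) : ℝ := bernPoly n x / (n.factorial : ℝ)

/-- The `L^r([0,1])` norm of `g`, `‖g‖_r = (∫_0^1 |g(x)|^r dx)^{1/r}`, for `1 ≤ r < ∞`. -/
noncomputable def normR (r : ℝ) (g : ℝ → ℝ) : ℝ :=
  (∫ x in (0:ℝ)..1, |g x| ^ r) ^ (1 / r)

section Aux
open Polynomial

theorem bern_reflect' (n : ℕ) :
    (Polynomial.bernoulli n).comp (1 - X) = (-1 : ℚ[X]) ^ n * Polynomial.bernoulli n := by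
  induction n using Nat.strong_induction_on with
  | _ n ih =>
    match n with
    | 0 => simp [Polynomial.bernoulli_zero]
    | (m+1) =>
      set Q : ℚ[X] := (Polynomial.bernoulli (m+1)).comp (1 - X) -
        (-1 : ℚ[X]) ^ (m+1) * Polynomial.bernoulli (m+1) with hQ
      have hd : derivative Q = 0 := by
        rw [hQ, derivative_sub, derivative_comp, derivative_mul]
        have e1 : Polynomial.derivative (Polynomial.bernoulli (m+1)) = (m+1 : ℚ[X]) * Polynomial.bernoulli m := by
          have := Polynomial.derivative_bernoulli_add_one m
          push_cast at this ⊢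
          rw [this]
        rw [e1]
        have e2 : ((m+1 : ℚ[X]) * Polynomial.bernoulli m).comp (1 - X)
            = (m+1 : ℚ[X]) * ((-1 : ℚ[X]) ^ m * Polynomial.bernoulli m) := by
          rw [mul_comp, ← ih m (by omega)]
          simp
        rw [e2]
        have e3 : Polynomial.derivative ((-1 : ℚ[X]) ^ (m+1)) = 0 := by
          rcases Nat.even_or_odd (m+1) with h | h
          · rw [h.neg_one_pow]; simp
          · rw [h.neg_one_pow]; simp
        rw [e3]
        have e4 : Polynomial.derivative (1 - X : ℚ[X]) = -1 := by simp
        rw [e4]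
        ring
      have hev : Q.eval 0 = 0 := by
        have h1 : Q.eval 0 = bernoulli' (m+1) - (-1:ℚ)^(m+1) * _root_.bernoulli (m+1) := by
          simp [hQ, Polynomial.eval_comp, Polynomial.bernoulli_eval_one,
            Polynomial.bernoulli_eval_zero]
        match m with
        | 0 => rw [h1]; norm_num [bernoulli'_one, _root_.bernoulli_one]
        | (k+1) =>
          rw [h1, ← bernoulli_eq_bernoulli'_of_ne_one (by omega)]
          rcases Nat.even_or_odd (k+2) with h | h
          · rw [h.neg_one_pow]; ring
          · rw [bernoulli_eq_bernoulli'_of_ne_one (by omega),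
              bernoulli'_eq_zero_of_odd h (by omega)]; ring
      have hc := Polynomial.eq_C_of_derivative_eq_zero hd
      rw [Polynomial.coeff_zero_eq_eval_zero, hev, map_zero] at hc
      rw [← sub_eq_zero]
      exact hc

end Aux

theorem pB_reflect {n : ℕ} (hodd : Odd n) (x : ℝ) : pB n (1 - x) = -(pB n x) := by
  have h : bernPoly n (1 - x) = (-1 : ℝ)^n * bernPoly n x := by
    have := congrArg (Polynomial.aeval x) (bern_reflect' n)
    rw [Polynomial.aeval_comp] at this
    simp only [map_mul, map_pow, map_neg, map_one, map_sub, Polynomial.aeval_X,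
      Polynomial.aeval_one] at this
    simpa [bernPoly] using this
  simp [pB, h, hodd.neg_one_pow, neg_div]

theorem pB_cont (n : ℕ) : Continuous (pB n) := by
  unfold pB bernPoly
  exact (Polynomial.continuous_aeval _).div_const _

theorem rpow_midpt {u v r : ℝ} (hu : 0 ≤ u) (hv : 0 ≤ v) (hr : 1 ≤ r) :
    ((u + v) / 2) ^ r ≤ (u ^ r + v ^ r) / 2 := by
  have h := (convexOn_rpow hr).2 (Set.mem_Ici.2 hu) (Set.mem_Ici.2 hv)
    (by norm_num : (0:ℝ) ≤ 1/2) (by norm_num : (0:ℝ) ≤ 1/2) (by norm_num)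
  simp only [smul_eq_mul] at h
  calc ((u + v) / 2) ^ r = (1/2 * u + 1/2 * v) ^ r := by ring_nf
  _ ≤ 1/2 * u ^ r + 1/2 * v ^ r := h
  _ = (u ^ r + v ^ r) / 2 := by ring

theorem rpow_midpt_lt {u v r : ℝ} (hu : 0 ≤ u) (hv : 0 ≤ v) (hr : 1 < r) (huv : u ≠ v) :
    ((u + v) / 2) ^ r < (u ^ r + v ^ r) / 2 := by
  have h := (strictConvexOn_rpow hr).2 (Set.mem_Ici.2 hu) (Set.mem_Ici.2 hv) huv
    (by norm_num : (0:ℝ) < 1/2) (by norm_num : (0:ℝ) < 1/2) (by norm_num)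
  simp only [smul_eq_mul] at h
  calc ((u + v) / 2) ^ r = (1/2 * u + 1/2 * v) ^ r := by ring_nf
  _ < 1/2 * u ^ r + 1/2 * v ^ r := h
  _ = (u ^ r + v ^ r) / 2 := by ring

theorem midpt_le {a c r : ℝ} (hr : 1 ≤ r) :
    |a| ^ r ≤ (|a + c| ^ r + |a - c| ^ r) / 2 := by
  have habs : 2 * |a| ≤ |a + c| + |a - c| := by
    have h1 : |2 * a| = |(a + c) + (a - c)| := by ring_nf
    have h2 := abs_add_le (a + c) (a - c)
    rw [abs_mul, abs_two] at h1
    linarith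
  calc |a| ^ r ≤ ((|a + c| + |a - c|) / 2) ^ r :=
        Real.rpow_le_rpow (abs_nonneg a) (by linarith) (by linarith)
  _ ≤ (|a + c| ^ r + |a - c| ^ r) / 2 := rpow_midpt (abs_nonneg _) (abs_nonneg _) hr

theorem midpt_lt {a c r : ℝ} (hr : 1 < r) (hc : c ≠ 0) :
    |a| ^ r < (|a + c| ^ r + |a - c| ^ r) / 2 := by
  by_cases h : |a + c| = |a - c|
  · have hne : a + c ≠ a - c := by intro h'; apply hc; linarith [h'.symm]
    have ha : a = 0 := by
      rcases abs_eq_abs.1 h with h' | h'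
      · exact absurd h' hne
      · linarith
    subst ha
    rw [abs_zero, Real.zero_rpow (by linarith : r ≠ 0)]
    have h1 : (0:ℝ) < |0 + c| ^ r := Real.rpow_pos_of_pos (by simpa [abs_pos] using hc) r
    have h2 : (0:ℝ) < |0 - c| ^ r := Real.rpow_pos_of_pos (by simpa [abs_pos] using hc) r
    linarith
  · have habs : 2 * |a| ≤ |a + c| + |a - c| := by
      have h1 : |2 * a| = |(a + c) + (a - c)| := by ring_nf
      have h2 := abs_add_le (a + c) (a - c)
      rw [abs_mul, abs_two] at h1
      linarith
    calc |a| ^ r ≤ ((|a + c| + |a - c|) / 2) ^ r :=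
          Real.rpow_le_rpow (abs_nonneg a) (by linarith) (by linarith)
    _ < (|a + c| ^ r + |a - c| ^ r) / 2 := rpow_midpt_lt (abs_nonneg _) (abs_nonneg _) hr h

/-- For odd `n ≥ 1` and `1 ≤ r < ∞`: for every `c ∈ ℝ`,
`‖p_n‖_r ≤ ‖p_n + c‖_r`, and the inequality is strict for nonzero `c` when `r > 1`. -/
theorem Lr_norm_pB_odd_min (n : ℕ) (hn : 1 ≤ n) (hodd : Odd n) (r : ℝ) (hr : 1 ≤ r)
    (c : ℝ) :
    normR r (pB n) ≤ normR r (fun x => pB n x + c) ∧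
      (1 < r → c ≠ 0 → normR r (pB n) < normR r (fun x => pB n x + c)) := by
  have hr0 : (0:ℝ) ≤ r := by linarith
  have cont : ∀ d : ℝ, Continuous fun x => |pB n x + d| ^ r := fun d =>
    (((pB_cont n).add continuous_const).abs).rpow_const (fun x => Or.inr hr0)
  have contsub : Continuous fun x => |pB n x - c| ^ r := by
    simpa [sub_eq_add_neg] using cont (-c)
  have cont0 : Continuous fun x => |pB n x| ^ r :=
    ((pB_cont n).abs).rpow_const (fun x => Or.inr hr0)
  have intg : ∀ d : ℝ, IntervalIntegrable (fun x => |pB n x + d| ^ r) volume 0 1 := fun d =>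
    (cont d).intervalIntegrable 0 1
  have intgsub : IntervalIntegrable (fun x => |pB n x - c| ^ r) volume 0 1 :=
    contsub.intervalIntegrable 0 1
  have intg0 : IntervalIntegrable (fun x => |pB n x| ^ r) volume 0 1 :=
    cont0.intervalIntegrable 0 1
  have contmid : Continuous fun x => (|pB n x + c| ^ r + |pB n x - c| ^ r) / 2 :=
    ((cont c).add contsub).div_const 2
  have intgmid : IntervalIntegrable
      (fun x => (|pB n x + c| ^ r + |pB n x - c| ^ r) / 2) volume 0 1 :=
    contmid.intervalIntegrable 0 1
  have symm : (∫ x in (0:ℝ)..1, |pB n x - c| ^ r) = ∫ x in (0:ℝ)..1, |pB n x + c| ^ r := by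
    have h1 : (∫ x in (0:ℝ)..1, |pB n (1 - x) + c| ^ r) = ∫ x in (0:ℝ)..1, |pB n x + c| ^ r := by
      rw [intervalIntegral.integral_comp_sub_left (fun x => |pB n x + c| ^ r) 1]
      norm_num
    rw [← h1]
    congr 1
    funext x
    rw [pB_reflect hodd x, show -(pB n x) + c = -(pB n x - c) by ring, abs_neg]
  have midsplit : (∫ x in (0:ℝ)..1, (|pB n x + c| ^ r + |pB n x - c| ^ r) / 2)
      = ∫ x in (0:ℝ)..1, |pB n x + c| ^ r := by
    rw [intervalIntegral.integral_div, intervalIntegral.integral_add (intg c) intgsub, symm]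
    ring
  have key_le : (∫ x in (0:ℝ)..1, |pB n x| ^ r) ≤ ∫ x in (0:ℝ)..1, |pB n x + c| ^ r := by
    rw [← midsplit]
    exact intervalIntegral.integral_mono_on (by norm_num) intg0 intgmid
      (fun x _ => midpt_le hr)
  have hA : (0:ℝ) ≤ ∫ x in (0:ℝ)..1, |pB n x| ^ r :=
    intervalIntegral.integral_nonneg (by norm_num)
      (fun x _ => Real.rpow_nonneg (abs_nonneg _) r)
  constructor
  · simp only [normR]
    exact Real.rpow_le_rpow hA key_le (by positivity)
  · intro hr1 hc
    have key_lt : (∫ x in (0:ℝ)..1, |pB n x| ^ r) < ∫ x in (0:ℝ)..1, |pB n x + c| ^ r := by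
      rw [← midsplit]
      have hpos : (0:ℝ) < ∫ x in (0:ℝ)..1,
          ((|pB n x + c| ^ r + |pB n x - c| ^ r) / 2 - |pB n x| ^ r) := by
        apply intervalIntegral.intervalIntegral_pos_of_pos_on
          ((contmid.sub cont0).intervalIntegrable 0 1)
          (fun x _ => sub_pos.2 (midpt_lt hr1 hc)) (by norm_num)
      have hsub := intervalIntegral.integral_sub intgmid intg0
      rw [hsub] at hpos
      linarith
    simp only [normR]
    exact Real.rpow_lt_rpow hA key_lt (by positivity)
end

section
/- Let n ≥ 1 be an integer, a < b real, N ≥ 1 an integer, p a real polynomial of degree n with leading coefficient 1/n!, and let 1 ≤ r, s ≤ ∞ with 1/r + 1/s = 1. If f : [a,b] → ℝ is such that f^{(n-1)} is absolutely continuous on [a,b] and f^{(n)} ∈ L^s([a,b]), then |E^N_{(a,b)}(p,f)| ≤ (b−a)^{n+1/r} N^{−n} ‖p‖_r ‖f^{(n)}‖_{L^s([a,b])}. -/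
open MeasureTheory intervalIntegral ENNReal Finset

lemma aux_sum_lintegral_Ioc (g : ℝ → ℝ≥0∞) (a h : ℝ) (hh : 0 ≤ h) (N : ℕ) :
    ∑ k ∈ Finset.range N, ∫⁻ t in Set.Ioc (a + k * h) (a + (k + 1) * h), g t
      = ∫⁻ t in Set.Ioc a (a + N * h), g t := by
  induction N with
  | zero => simp
  | succ N ih =>
    rw [Finset.sum_range_succ, ih]
    have h1 : a ≤ a + N * h := by nlinarith [Nat.cast_nonneg (α := ℝ) N]
    have h2 : a + N * h ≤ a + (N + 1) * h := by nlinarith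
    have hdisj : Disjoint (Set.Ioc a (a + N * h)) (Set.Ioc (a + N * h) (a + (N + 1) * h)) := by
      rw [Set.Ioc_disjoint_Ioc]
      exact (min_le_left _ _).trans (le_max_right _ _)
    rw [← lintegral_union measurableSet_Ioc hdisj, Set.Ioc_union_Ioc_eq_Ioc h1 h2]
    congr 1
    push_cast; ring_nf

lemma aux_discrete_holder (x : ℕ → ℝ≥0∞) (N : ℕ) (hN : 0 < N) (σ : ℝ) (hσ : 1 ≤ σ) :
    ∑ k ∈ Finset.range N, x k
      ≤ (N : ℝ≥0∞) ^ (1 - 1/σ) * (∑ k ∈ Finset.range N, x k ^ σ) ^ (1/σ) := by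
  have hσ0 : 0 < σ := lt_of_lt_of_le one_pos hσ
  have hNne : (N : ℝ≥0∞) ≠ 0 := by exact_mod_cast hN.ne'
  have hNtop : (N : ℝ≥0∞) ≠ ∞ := natCast_ne_top N
  have hw : ∑ _k ∈ Finset.range N, (N : ℝ≥0∞)⁻¹ = 1 := by
    rw [Finset.sum_const, Finset.card_range, nsmul_eq_mul, ENNReal.mul_inv_cancel hNne hNtop]
  have key := ENNReal.rpow_arith_mean_le_arith_mean_rpow (Finset.range N)
    (fun _ => (N : ℝ≥0∞)⁻¹) x hw hσ
  rw [← Finset.mul_sum, ← Finset.mul_sum,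
    ENNReal.mul_rpow_of_nonneg _ _ hσ0.le] at key
  have key2 : (∑ k ∈ Finset.range N, x k) ^ σ
      ≤ (N : ℝ≥0∞) ^ (σ - 1) * ∑ k ∈ Finset.range N, x k ^ σ := by
    have hNσ : ((N : ℝ≥0∞) ^ σ) * ((N : ℝ≥0∞)⁻¹ ^ σ) = 1 := by
      rw [← ENNReal.mul_rpow_of_nonneg _ _ hσ0.le, ENNReal.mul_inv_cancel hNne hNtop,
        ENNReal.one_rpow]
    calc (∑ k ∈ Finset.range N, x k) ^ σ
        = (N : ℝ≥0∞) ^ σ * ((N : ℝ≥0∞)⁻¹ ^ σ * (∑ k ∈ Finset.range N, x k) ^ σ) := by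
          rw [← mul_assoc, hNσ, one_mul]
      _ ≤ (N : ℝ≥0∞) ^ σ * ((N : ℝ≥0∞)⁻¹ * ∑ k ∈ Finset.range N, x k ^ σ) :=
          mul_le_mul_right key _
      _ = (N : ℝ≥0∞) ^ (σ - 1) * ∑ k ∈ Finset.range N, x k ^ σ := by
          rw [← mul_assoc]
          congr 1
          rw [show ((N : ℝ≥0∞))⁻¹ = (N : ℝ≥0∞) ^ (-1 : ℝ) by rw [ENNReal.rpow_neg_one],
            ← ENNReal.rpow_add _ _ hNne hNtop]
          ring_nf
  calc ∑ k ∈ Finset.range N, x k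
      = ((∑ k ∈ Finset.range N, x k) ^ σ) ^ (1/σ) := by
        rw [← ENNReal.rpow_mul, mul_one_div, div_self hσ0.ne', ENNReal.rpow_one]
    _ ≤ ((N : ℝ≥0∞) ^ (σ - 1) * ∑ k ∈ Finset.range N, x k ^ σ) ^ (1/σ) :=
        ENNReal.rpow_le_rpow key2 (by positivity)
    _ = (N : ℝ≥0∞) ^ (1 - 1/σ) * (∑ k ∈ Finset.range N, x k ^ σ) ^ (1/σ) := by
        rw [ENNReal.mul_rpow_of_nonneg _ _ (by positivity), ← ENNReal.rpow_mul]
        congr 2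
        field_simp

lemma aux_map_affine (c h : ℝ) (hh : 0 < h) :
    Measure.map (fun x => c + h * x) (volume.restrict (Set.Icc 0 1))
      = ENNReal.ofReal h⁻¹ • volume.restrict (Set.Icc c (c + h)) := by
  have hmeas : Measurable (fun x : ℝ => c + h * x) :=
    measurable_const.add (measurable_id.const_mul h)
  have hpre : (fun x : ℝ => c + h * x) ⁻¹' Set.Icc c (c + h) = Set.Icc 0 1 := by
    ext x
    simp only [Set.mem_preimage, Set.mem_Icc]
    constructor
    · rintro ⟨h1, h2⟩
      constructor <;> nlinarith
    · rintro ⟨h1, h2⟩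
      constructor <;> nlinarith
  have hmap : Measure.map (fun x : ℝ => c + h * x) volume = ENNReal.ofReal h⁻¹ • volume := by
    have e : (fun x : ℝ => c + h * x) = (fun y => c + y) ∘ (h * ·) := rfl
    have hg : Measurable (fun y : ℝ => c + y) := by fun_prop
    have hf : Measurable (fun x : ℝ => h * x) := by fun_prop
    rw [e, ← Measure.map_map hg hf, Real.map_volume_mul_left hh.ne',
      Measure.map_smul, map_add_left_eq_self volume c, abs_of_pos (inv_pos.2 hh)]
  rw [← hpre, ← Measure.restrict_map hmeas measurableSet_Icc, hmap, Measure.restrict_smul]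

/-- **composite Hölder error bound.** Let `n ≥ 1`, `a < b`, `N ≥ 1`,
`p` a real polynomial of degree `n` with leading coefficient `1/n!`, and `1 ≤ r, s ≤ ∞`
conjugate exponents. If `f^{(n-1)}` is absolutely continuous on `[a,b]` and
`f^{(n)} ∈ L^s([a,b])`, then
`|E^N_{(a,b)}(p,f)| ≤ (b−a)^{n+1/r} N^{−n} ‖p‖_{L^r([0,1])} ‖f^{(n)}‖_{L^s([a,b])}`
(with the exponent read as `n` when `r = ∞`). -/
theorem composite_holder_error_bound (n : ℕ) (hn : 1 ≤ n) (a b : ℝ) (hab : a < b)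
    (N : ℕ) (hN : 1 ≤ N)
    (p : Polynomial ℝ) (hdeg : p.natDegree = n)
    (hlead : p.leadingCoeff = 1 / (n.factorial : ℝ))
    (r s : ℝ≥0∞) (hr : 1 ≤ r) (hs : 1 ≤ s) (hrs : 1 / r + 1 / s = 1)
    (f : ℝ → ℝ) (hreg : ContDiffOn ℝ (n - 1 : ℕ) f (Set.Icc a b))
    (hAC : ACOn (iteratedDerivWithin (n - 1) f (Set.Icc a b))
      (iteratedDerivWithin n f (Set.Icc a b)) a b)
    (hLs : MemLp (iteratedDerivWithin n f (Set.Icc a b)) s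
      (volume.restrict (Set.Icc a b))) :
    ENNReal.ofReal
        |errEN a b N n (fun x => p.eval x) (iteratedDerivWithin n f (Set.Icc a b))| ≤
      ENNReal.ofReal ((b - a) ^ ((n : ℝ) + 1 / r.toReal) / (N : ℝ) ^ n) *
        eLpNorm (fun x => p.eval x) r (volume.restrict (Set.Icc (0:ℝ) 1)) *
        eLpNorm (iteratedDerivWithin n f (Set.Icc a b)) s
          (volume.restrict (Set.Icc a b)) := by
  classical
  have hbma : (0:ℝ) < b - a := sub_pos.2 hab
  have hNpos : (0:ℝ) < (N:ℝ) := by exact_mod_cast hN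
  set fn := iteratedDerivWithin n f (Set.Icc a b) with hfndef
  set h : ℝ := (b - a) / N with hhdef
  have hhpos : 0 < h := div_pos hbma hNpos
  have hab' : a + N * h = b := by
    rw [hhdef]; field_simp; ring
  -- conjugate exponent facts
  have hr1 : 1/r ≤ 1 := le_trans le_self_add hrs.le
  have hs1 : 1/s ≤ 1 := le_trans le_add_self hrs.le
  have hrfin : 1/r ≠ ∞ := (lt_of_le_of_lt hr1 one_lt_top).ne
  have hsfin : 1/s ≠ ∞ := (lt_of_le_of_lt hs1 one_lt_top).ne
  set ρ : ℝ := (1/r).toReal with hρdef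
  set σ' : ℝ := (1/s).toReal with hσ'def
  have hρσ : ρ + σ' = 1 := by
    rw [hρdef, hσ'def, ← ENNReal.toReal_add hrfin hsfin, hrs, ENNReal.toReal_one]
  have hρ0 : 0 ≤ ρ := ENNReal.toReal_nonneg
  have hσ'0 : 0 ≤ σ' := ENNReal.toReal_nonneg
  have hρr : ρ = 1 / r.toReal := by
    rw [hρdef, one_div, one_div, ENNReal.toReal_inv]
  set μ₀ := volume.restrict (Set.Icc (0:ℝ) 1) with hμ₀def
  set A := eLpNorm (fun x => p.eval x) r μ₀ with hAdef
  set X := eLpNorm fn s (volume.restrict (Set.Icc a b)) with hXdef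
  set x : ℕ → ℝ≥0∞ := fun k =>
    eLpNorm fn s (volume.restrict (Set.Icc (a + k * h) (a + (k + 1) * h))) with hxdef
  have hfnm : AEStronglyMeasurable fn (volume.restrict (Set.Icc a b)) := hLs.1
  have hp_meas : AEStronglyMeasurable (fun x => p.eval x) μ₀ :=
    p.continuous.aestronglyMeasurable
  have hsub : ∀ k : ℕ, k < N → Set.Icc (a + k * h) (a + (k + 1) * h) ⊆ Set.Icc a b := by
    intro k hk
    have hk' : (k:ℝ) + 1 ≤ N := by exact_mod_cast hk
    apply Set.Icc_subset_Icc
    · nlinarith [Nat.cast_nonneg (α := ℝ) k]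
    · nlinarith
  -- per-interval bound
  have key : ∀ k : ℕ, k < N →
      ENNReal.ofReal |errE (a + k * h) (a + (k + 1) * h) n (fun x => p.eval x) fn|
        ≤ ENNReal.ofReal (h ^ ((n:ℝ) + ρ)) * (A * x k) := by
    intro k hk
    set c : ℝ := a + k * h with hcdef
    set d : ℝ := a + (k + 1) * h with hddef
    have hdc : d - c = h := by rw [hcdef, hddef]; ring
    have hcd : c + h = d := by rw [hcdef, hddef]; ring
    have hmap := aux_map_affine c h hhpos
    rw [hcd] at hmap
    have hfn_cd : AEStronglyMeasurable fn (volume.restrict (Set.Icc c d)) :=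
      hfnm.mono_measure (Measure.restrict_mono (hsub k hk) le_rfl)
    have hfn_map : AEStronglyMeasurable fn (Measure.map (fun y => c + h * y) μ₀) := by
      rw [hμ₀def, hmap]
      exact hfn_cd.mono_ac Measure.smul_absolutelyContinuous
    have hL : AEMeasurable (fun y : ℝ => c + h * y) μ₀ := by fun_prop
    have hofne : (ENNReal.ofReal h⁻¹) ≠ 0 := by
      simp [ENNReal.ofReal_eq_zero, not_le, inv_pos, hhpos]
    have hcomp : eLpNorm (fun y => fn (c + h * y)) s μ₀
        = ENNReal.ofReal h⁻¹ ^ σ' * x k := by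
      have e1 := eLpNorm_map_measure (p := s) hfn_map hL
      rw [hμ₀def, hmap, eLpNorm_smul_measure_of_ne_zero hofne] at e1
      have e2 : eLpNorm (fun y => fn (c + h * y)) s μ₀
          = eLpNorm (fn ∘ fun y => c + h * y) s (volume.restrict (Set.Icc 0 1)) := rfl
      rw [e2, ← e1, smul_eq_mul, hσ'def]
    have hcompm : AEStronglyMeasurable (fun y => fn (c + h * y)) μ₀ :=
      hfn_map.comp_aemeasurable hL
    have hH : eLpNorm (fun y => p.eval y * fn (c + h * y)) 1 μ₀
        ≤ A * eLpNorm (fun y => fn (c + h * y)) s μ₀ := by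
      haveI : ENNReal.HolderTriple r s 1 := ⟨by simpa [one_div] using hrs⟩
      have := eLpNorm_smul_le_mul_eLpNorm (p := r) (q := s) (r := 1)
        hcompm hp_meas
      exact this
    -- bound the error integral by an L¹ norm
    have hint : ENNReal.ofReal |errE c d n (fun x => p.eval x) fn|
        ≤ ENNReal.ofReal (h ^ (n + 1)) *
          eLpNorm (fun y => p.eval y * fn (c + h * y)) 1 μ₀ := by
      have habs : |errE c d n (fun x => p.eval x) fn|
          = h ^ (n + 1) * |∫ y in (0:ℝ)..1, p.eval y * fn (c + h * y)| := by
        rw [errE, hdc, abs_mul, abs_mul, abs_pow, abs_neg, abs_one, one_pow, one_mul,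
          abs_of_pos (pow_pos hhpos _)]
      rw [habs, ENNReal.ofReal_mul (by positivity)]
      refine mul_le_mul_right ?_ _
      set g : ℝ → ℝ := fun y => p.eval y * fn (c + h * y) with hgdef
      have h1 : |∫ y in (0:ℝ)..1, g y|
          ≤ (∫⁻ y in Set.Ioc (0:ℝ) 1, ENNReal.ofReal ‖g y‖).toReal := by
        rw [intervalIntegral.integral_of_le zero_le_one, ← Real.norm_eq_abs]
        exact norm_integral_le_lintegral_norm g
      calc ENNReal.ofReal |∫ y in (0:ℝ)..1, g y|
          ≤ ENNReal.ofReal ((∫⁻ y in Set.Ioc (0:ℝ) 1, ENNReal.ofReal ‖g y‖).toReal) :=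
            ENNReal.ofReal_le_ofReal h1
        _ ≤ ∫⁻ y in Set.Ioc (0:ℝ) 1, ENNReal.ofReal ‖g y‖ := ENNReal.ofReal_toReal_le
        _ ≤ ∫⁻ y in Set.Icc (0:ℝ) 1, ENNReal.ofReal ‖g y‖ :=
            lintegral_mono' (Measure.restrict_mono Set.Ioc_subset_Icc_self le_rfl) le_rfl
        _ = eLpNorm g 1 μ₀ := by
            rw [eLpNorm_one_eq_lintegral_enorm, hμ₀def]
            simp_rw [ofReal_norm]
    -- combine
    have hcoef : ENNReal.ofReal (h ^ (n + 1)) * ENNReal.ofReal h⁻¹ ^ σ'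
        = ENNReal.ofReal (h ^ ((n:ℝ) + ρ)) := by
      rw [ENNReal.ofReal_rpow_of_pos (inv_pos.2 hhpos),
        ← ENNReal.ofReal_mul (by positivity)]
      congr 1
      rw [Real.inv_rpow hhpos.le, ← Real.rpow_neg hhpos.le,
        ← Real.rpow_natCast h (n + 1), ← Real.rpow_add hhpos]
      congr 1
      push_cast
      linarith
    calc ENNReal.ofReal |errE c d n (fun x => p.eval x) fn|
        ≤ ENNReal.ofReal (h ^ (n + 1)) *
          eLpNorm (fun y => p.eval y * fn (c + h * y)) 1 μ₀ := hint
      _ ≤ ENNReal.ofReal (h ^ (n + 1)) * (A * (ENNReal.ofReal h⁻¹ ^ σ' * x k)) := by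
          rw [← hcomp]
          exact mul_le_mul_right hH _
      _ = ENNReal.ofReal (h ^ ((n:ℝ) + ρ)) * (A * x k) := by
          rw [← hcoef]; ring
  -- sum up
  have hsum : ENNReal.ofReal |errEN a b N n (fun x => p.eval x) fn|
      ≤ ENNReal.ofReal (h ^ ((n:ℝ) + ρ)) * A * ∑ k ∈ Finset.range N, x k := by
    rw [errEN]
    simp_rw [← hhdef]
    calc ENNReal.ofReal
          |∑ k ∈ Finset.range N, errE (a + k * h) (a + (k + 1) * h) n (fun x => p.eval x) fn|
        ≤ ENNReal.ofReal
          (∑ k ∈ Finset.range N, |errE (a + k * h) (a + (k + 1) * h) n (fun x => p.eval x) fn|) :=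
          ENNReal.ofReal_le_ofReal (Finset.abs_sum_le_sum_abs _ _)
      _ = ∑ k ∈ Finset.range N,
          ENNReal.ofReal |errE (a + k * h) (a + (k + 1) * h) n (fun x => p.eval x) fn| :=
          ENNReal.ofReal_sum_of_nonneg (fun _ _ => abs_nonneg _)
      _ ≤ ∑ k ∈ Finset.range N, ENNReal.ofReal (h ^ ((n:ℝ) + ρ)) * (A * x k) :=
          Finset.sum_le_sum (fun k hk => key k (Finset.mem_range.mp hk))
      _ = ENNReal.ofReal (h ^ ((n:ℝ) + ρ)) * A * ∑ k ∈ Finset.range N, x k := by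
          rw [Finset.mul_sum]
          exact Finset.sum_congr rfl (fun k _ => by ring)
  -- sum of local norms
  have hsum2 : ∑ k ∈ Finset.range N, x k ≤ (N : ℝ≥0∞) ^ ρ * X := by
    by_cases hstop : s = ∞
    · have hρ1 : ρ = 1 := by
        have e : 1/r = 1 := by
          rw [hstop] at hrs; simpa using hrs
        rw [hρdef, e, ENNReal.toReal_one]
      have hxk : ∀ k ∈ Finset.range N, x k ≤ X := fun k hk =>
        eLpNorm_mono_measure _ (Measure.restrict_mono (hsub k (Finset.mem_range.mp hk)) le_rfl)
      calc ∑ k ∈ Finset.range N, x k ≤ ∑ _k ∈ Finset.range N, X := Finset.sum_le_sum hxk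
        _ = (N : ℝ≥0∞) * X := by rw [Finset.sum_const, Finset.card_range, nsmul_eq_mul]
        _ = (N : ℝ≥0∞) ^ ρ * X := by rw [hρ1, ENNReal.rpow_one]
    · have hs0 : s ≠ 0 := (lt_of_lt_of_le one_pos hs).ne'
      set σ : ℝ := s.toReal with hσdef
      have hσ1 : 1 ≤ σ := by
        rw [hσdef, ← ENNReal.toReal_one]
        exact ENNReal.toReal_mono hstop hs
      have hσ0 : 0 < σ := lt_of_lt_of_le one_pos hσ1
      have hσ'σ : σ' = 1/σ := by
        rw [hσ'def, hσdef, one_div, one_div, ENNReal.toReal_inv]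
      have hρ' : ρ = 1 - 1/σ := by rw [← hσ'σ]; linarith
      have hIccIoc : ∀ u v : ℝ, ∫⁻ t in Set.Icc u v, (‖fn t‖₊ : ℝ≥0∞) ^ σ
          = ∫⁻ t in Set.Ioc u v, (‖fn t‖₊ : ℝ≥0∞) ^ σ := fun u v => by
        rw [Measure.restrict_congr_set MeasureTheory.Ioc_ae_eq_Icc]
      have hxpow : ∀ k : ℕ, x k ^ σ
          = ∫⁻ t in Set.Ioc (a + k * h) (a + (k + 1) * h), (‖fn t‖₊ : ℝ≥0∞) ^ σ := by
        intro k
        simp only [hxdef]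
        rw [eLpNorm_eq_lintegral_rpow_enorm_toReal hs0 hstop]
        simp only [enorm_eq_nnnorm]
        rw [← ENNReal.rpow_mul,
          one_div, inv_mul_cancel₀ hσ0.ne', ENNReal.rpow_one, ← hσdef, hIccIoc]
      have hXpow : X ^ σ = ∫⁻ t in Set.Ioc a b, (‖fn t‖₊ : ℝ≥0∞) ^ σ := by
        rw [hXdef, eLpNorm_eq_lintegral_rpow_enorm_toReal hs0 hstop]
        simp only [enorm_eq_nnnorm]
        rw [← ENNReal.rpow_mul,
          one_div, inv_mul_cancel₀ hσ0.ne', ENNReal.rpow_one, ← hσdef, hIccIoc]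
      have hdh := aux_discrete_holder x N (by omega) σ hσ1
      have hsumpow : ∑ k ∈ Finset.range N, x k ^ σ = X ^ σ := by
        simp_rw [hxpow]
        rw [aux_sum_lintegral_Ioc _ a h hhpos.le N, hab', hXpow]
      rw [hsumpow, ← ENNReal.rpow_mul, mul_one_div, div_self hσ0.ne',
        ENNReal.rpow_one, ← hρ'] at hdh
      exact hdh
  -- final computation
  have hscal : ENNReal.ofReal (h ^ ((n:ℝ) + ρ)) * (N : ℝ≥0∞) ^ ρ
      = ENNReal.ofReal ((b - a) ^ ((n : ℝ) + 1 / r.toReal) / (N : ℝ) ^ n) := by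
    rw [← hρr, show ((N : ℝ≥0∞)) ^ ρ = ENNReal.ofReal ((N:ℝ) ^ ρ) by
        rw [← ENNReal.ofReal_natCast N, ENNReal.ofReal_rpow_of_pos hNpos],
      ← ENNReal.ofReal_mul (by positivity)]
    congr 1
    rw [hhdef, Real.div_rpow hbma.le hNpos.le]
    rw [show ((N:ℝ) ^ n : ℝ) = (N:ℝ) ^ ((n:ℝ)) from (Real.rpow_natCast _ n).symm,
      Real.rpow_add hNpos]
    have hne1 : (N:ℝ) ^ ((n:ℝ)) ≠ 0 := by positivity
    have hne2 : (N:ℝ) ^ ρ ≠ 0 := by positivity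
    field_simp
  calc ENNReal.ofReal |errEN a b N n (fun x => p.eval x) fn|
      ≤ ENNReal.ofReal (h ^ ((n:ℝ) + ρ)) * A * ((N : ℝ≥0∞) ^ ρ * X) :=
        hsum.trans (mul_le_mul_right hsum2 _)
    _ = ENNReal.ofReal (h ^ ((n:ℝ) + ρ)) * (N : ℝ≥0∞) ^ ρ * A * X := by ring
    _ = ENNReal.ofReal ((b - a) ^ ((n : ℝ) + 1 / r.toReal) / (N : ℝ) ^ n) * A * X := by
        rw [hscal]
end

section
/- Let n ≥ 1 be an integer, a < b real, and p a real polynomial of degree n with leading coefficient 1/n!. Then there exists f : [a,b] → ℝ with f^{(n-1)} absolutely continuous on [a,b], ‖f^{(n)}‖_{L^∞([a,b])} = 1, and |E_{(a,b)}(p,f)| = (b−a)^{n+1} ‖p‖_1; that is, the bound |E_{(a,b)}(p,f)| ≤ (b−a)^{n+1} ‖p‖_1 ‖f^{(n)}‖_{L^∞([a,b])} is attained (e.g. for any f with f^{(n)}(a+(b−a)x) = sgn(p(x)) for a.e. x ∈ [0,1]). -/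
open MeasureTheory intervalIntegral

/-- The rescaled sign function of `p`. -/
noncomputable def sgnP (a b : ℝ) (p : Polynomial ℝ) (x : ℝ) : ℝ :=
  if 0 ≤ p.eval ((x - a) / (b - a)) then 1 else -1

/-- Iterated primitives of `sgnP`. -/
noncomputable def Fiter (a b : ℝ) (p : Polynomial ℝ) : ℕ → ℝ → ℝ
  | 0 => sgnP a b p
  | (k + 1) => fun x => ∫ t in a..x, Fiter a b p k t

lemma sgnP_measurable (a b : ℝ) (p : Polynomial ℝ) : Measurable (sgnP a b p) := by
  apply Measurable.ite _ measurable_const measurable_const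
  exact measurableSet_le measurable_const
    ((p.continuous_aeval.comp (by fun_prop)).measurable)

lemma sgnP_abs (a b : ℝ) (p : Polynomial ℝ) (x : ℝ) : |sgnP a b p x| = 1 := by
  unfold sgnP; split <;> simp

lemma sgnP_intervalIntegrable (a b : ℝ) (p : Polynomial ℝ) (c d : ℝ) :
    IntervalIntegrable (sgnP a b p) volume c d := by
  rw [intervalIntegrable_iff]
  have hfin : IntegrableOn (fun _ => (1:ℝ)) (Set.uIoc c d) volume := by
    refine (integrableOn_const_iff (C := (1:ℝ)) (by simp)).mpr (Or.inr ?_)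
    exact measure_Ioc_lt_top
  apply Integrable.mono' hfin
    (sgnP_measurable a b p).aestronglyMeasurable
  filter_upwards with x
  rw [Real.norm_eq_abs, sgnP_abs]

lemma Fiter_int_cont (a b : ℝ) (p : Polynomial ℝ) :
    ∀ k, (∀ c d, IntervalIntegrable (Fiter a b p k) volume c d) ∧
      Continuous (Fiter a b p (k + 1)) := by
  intro k
  induction k with
  | zero =>
    refine ⟨sgnP_intervalIntegrable a b p, ?_⟩
    exact intervalIntegral.continuous_primitive (sgnP_intervalIntegrable a b p) a
  | succ k ih =>
    have hc : Continuous (Fiter a b p (k + 1)) := ih.2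
    have hint : ∀ c d, IntervalIntegrable (Fiter a b p (k + 1)) volume c d :=
      fun c d => hc.intervalIntegrable c d
    exact ⟨hint, intervalIntegral.continuous_primitive hint a⟩

lemma Fiter_hasDerivAt (a b : ℝ) (p : Polynomial ℝ) (k : ℕ) (x : ℝ) :
    HasDerivAt (Fiter a b p (k + 2)) (Fiter a b p (k + 1) x) x := by
  have hc : Continuous (Fiter a b p (k + 1)) := (Fiter_int_cont a b p k).2
  exact intervalIntegral.integral_hasDerivAt_right
    (hc.intervalIntegrable a x)
    hc.aestronglyMeasurable.stronglyMeasurableAtFilter hc.continuousAt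

lemma Fiter_hasDerivAt_zero (a b : ℝ) (p : Polynomial ℝ) (x : ℝ)
    (hx : p.eval ((x - a) / (b - a)) ≠ 0) :
    HasDerivAt (Fiter a b p 1) (sgnP a b p x) x := by
  have hq : Continuous fun y => p.eval ((y - a) / (b - a)) :=
    p.continuous_aeval.comp (by fun_prop)
  have hcs : ContinuousAt (sgnP a b p) x := by
    rcases hx.lt_or_gt with h | h
    · have h1 : sgnP a b p =ᶠ[nhds x] fun _ => (-1 : ℝ) := by
        filter_upwards [hq.continuousAt.eventually_lt continuousAt_const h] with y hy
        simp [sgnP, not_le.mpr hy]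
      exact h1.continuousAt
    · have h1 : sgnP a b p =ᶠ[nhds x] fun _ => (1 : ℝ) := by
        filter_upwards [continuousAt_const.eventually_lt hq.continuousAt h] with y hy
        simp [sgnP, hy.le]
      exact h1.continuousAt
  exact intervalIntegral.integral_hasDerivAt_right
    (sgnP_intervalIntegrable a b p a x)
    (sgnP_measurable a b p).aestronglyMeasurable.stronglyMeasurableAtFilter hcs

lemma Fiter_contDiff (a b : ℝ) (p : Polynomial ℝ) :
    ∀ k : ℕ, ContDiff ℝ k (Fiter a b p (k + 1)) := by
  intro k
  induction k with
  | zero => exact contDiff_zero.mpr (Fiter_int_cont a b p 0).2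
  | succ k ih =>
    rw [show ((k + 1 : ℕ) : WithTop ℕ∞) = (k : ℕ) + 1 by norm_cast]
    rw [contDiff_succ_iff_deriv]
    refine ⟨fun x => (Fiter_hasDerivAt a b p k x).differentiableAt, by simp, ?_⟩
    have : deriv (Fiter a b p (k + 2)) = Fiter a b p (k + 1) :=
      funext fun x => (Fiter_hasDerivAt a b p k x).deriv
    rw [this]; exact ih

/-- **sharpness, `r = 1`, `s = ∞`.** For `n ≥ 1`, `a < b` and a real polynomial
`p` of degree `n` with leading coefficient `1/n!`, there exists `f : [a,b] → ℝ` with `f^{(n-1)}`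
absolutely continuous on `[a,b]`, `‖f^{(n)}‖_{L^∞([a,b])} = 1`, and
`|E_{(a,b)}(p,f)| = (b−a)^{n+1} ‖p‖_{L^1([0,1])}`. -/
theorem holder_bound_sharp_one_infty (n : ℕ) (hn : 1 ≤ n) (a b : ℝ) (hab : a < b)
    (p : Polynomial ℝ) (hdeg : p.natDegree = n)
    (hlead : p.leadingCoeff = 1 / (n.factorial : ℝ)) :
    ∃ f : ℝ → ℝ,
      ContDiffOn ℝ (n - 1 : ℕ) f (Set.Icc a b) ∧
      ACOn (iteratedDerivWithin (n - 1) f (Set.Icc a b))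
        (iteratedDerivWithin n f (Set.Icc a b)) a b ∧
      eLpNorm (iteratedDerivWithin n f (Set.Icc a b)) ⊤
          (volume.restrict (Set.Icc a b)) = 1 ∧
      |errE a b n (fun x => p.eval x) (iteratedDerivWithin n f (Set.Icc a b))| =
        (b - a) ^ (n + 1) * ∫ x in (0:ℝ)..1, |p.eval x| := by
  have hba : (0:ℝ) < b - a := sub_pos.mpr hab
  set f : ℝ → ℝ := Fiter a b p n with hf
  set s : Set ℝ := Set.Icc a b with hs
  have hud : UniqueDiffOn ℝ s := uniqueDiffOn_Icc hab
  -- the function is globally C^{n-1}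
  have hsm : ContDiff ℝ ((n - 1 : ℕ) : WithTop ℕ∞) f := by
    have := Fiter_contDiff a b p (n - 1)
    rwa [Nat.sub_add_cancel hn] at this
  -- iterated derivatives within s
  have hiter : ∀ k, k ≤ n - 1 →
      Set.EqOn (iteratedDerivWithin k f s) (Fiter a b p (n - k)) s := by
    intro k
    induction k with
    | zero => intro _ x _; simp [hf]
    | succ k ih =>
      intro hk x hx
      have hk' : k ≤ n - 1 := le_trans (Nat.le_succ k) hk
      rw [iteratedDerivWithin_succ]
      rw [derivWithin_congr (ih hk') (ih hk' hx)]
      have hd := (Fiter_hasDerivAt a b p (n - k - 2) x).hasDerivWithinAt (s := s)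
      rw [show n - k - 2 + 2 = n - k from by omega] at hd
      rw [hd.derivWithin (hud x hx)]
      congr 1
      omega
  have hA : Set.EqOn (iteratedDerivWithin (n - 1) f s) (Fiter a b p 1) s := by
    have := hiter (n - 1) le_rfl
    have h1 : n - (n - 1) = 1 := by omega
    rwa [h1] at this
  -- the n-th derivative equals sgnP off the zero set
  have hB : ∀ x ∈ s, p.eval ((x - a) / (b - a)) ≠ 0 →
      iteratedDerivWithin n f s x = sgnP a b p x := by
    intro x hx hxz
    have hn1 : n = (n - 1) + 1 := by omega
    rw [hn1, iteratedDerivWithin_succ, derivWithin_congr hA (hA hx)]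
    exact ((Fiter_hasDerivAt_zero a b p x hxz).hasDerivWithinAt.mono
      (fun y _ => trivial)).derivWithin (hud x hx)
  -- zero set is finite
  have hp0 : p ≠ 0 := by
    intro h
    rw [h] at hlead
    simp at hlead
    exact Nat.factorial_ne_zero n (by exact_mod_cast hlead.symm)
  have hZfin : Set.Finite {x : ℝ | p.eval ((x - a) / (b - a)) = 0} := by
    have hinj : Set.InjOn (fun x : ℝ => (x - a) / (b - a))
        {x : ℝ | p.eval ((x - a) / (b - a)) = 0} := by
      intro x _ y _ h
      simp only at h
      rw [div_eq_div_iff (ne_of_gt hba) (ne_of_gt hba)] at h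
      have h2 := mul_right_cancel₀ (ne_of_gt hba) h
      linarith
    exact Set.Finite.of_finite_image ((Polynomial.finite_setOf_isRoot hp0).subset
      (by rintro _ ⟨x, hx, rfl⟩; simpa using hx)) hinj
  have hZnull : volume {x : ℝ | p.eval ((x - a) / (b - a)) = 0} = 0 :=
    hZfin.measure_zero _
  -- a.e. equality on the restriction to s
  have haeB : iteratedDerivWithin n f s =ᵐ[volume.restrict s] sgnP a b p := by
    rw [Filter.EventuallyEq, ae_restrict_iff' measurableSet_Icc]
    have : ∀ᵐ x ∂(volume : Measure ℝ), p.eval ((x - a) / (b - a)) ≠ 0 := by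
      rw [MeasureTheory.ae_iff]
      simpa using hZnull
    filter_upwards [this] with x hx hxs
    exact hB x hxs hx
  refine ⟨f, hsm.contDiffOn, ⟨?_, ?_⟩, ?_, ?_⟩
  -- integrability of the n-th derivative
  · have h1 : IntervalIntegrable (sgnP a b p) volume a b := sgnP_intervalIntegrable a b p a b
    rw [intervalIntegrable_iff] at h1 ⊢
    apply h1.congr_fun_ae
    have hsub : Set.uIoc a b ⊆ s := by
      rw [Set.uIoc_of_le hab.le]; exact Set.Ioc_subset_Icc_self
    exact haeB.symm.filter_mono (ae_mono (Measure.restrict_mono hsub le_rfl))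
  -- the fundamental theorem identity
  · intro x hx
    have hAa : iteratedDerivWithin (n - 1) f s a = 0 := by
      rw [hA (Set.left_mem_Icc.mpr hab.le)]
      simp [Fiter]
    rw [hA hx, hAa]
    have : (∫ t in a..x, iteratedDerivWithin n f s t) = ∫ t in a..x, sgnP a b p t := by
      apply intervalIntegral.integral_congr_ae
      have hsub : Set.Ioc (min a x) (max a x) ⊆ s := by
        rw [min_eq_left hx.1, max_eq_right hx.1]
        exact Set.Ioc_subset_Icc_self.trans (Set.Icc_subset_Icc le_rfl hx.2)
      have := haeB.filter_mono (ae_mono (Measure.restrict_mono hsub le_rfl))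
      rw [Filter.EventuallyEq, ae_restrict_iff' measurableSet_Ioc] at this
      filter_upwards [this] with t ht hts
      exact ht (by simpa [Set.uIoc] using hts)
    rw [this, zero_add]
    rfl
  -- the sup-norm is 1
  · have : eLpNorm (iteratedDerivWithin n f s) ⊤ (volume.restrict s) =
        eLpNorm (sgnP a b p) ⊤ (volume.restrict s) := eLpNorm_congr_ae haeB
    rw [this, eLpNorm_exponent_top, eLpNormEssSup]
    have h1 : (fun x => ‖sgnP a b p x‖ₑ) = fun _ => (1 : ENNReal) := by
      funext x
      have := sgnP_abs a b p x
      simp only [← Real.norm_eq_abs] at this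
      simp [Real.enorm_eq_ofReal_abs, sgnP_abs]
    rw [h1]
    apply essSup_const
    rw [ne_eq, Measure.restrict_eq_zero, hs, Real.volume_Icc, ENNReal.ofReal_eq_zero, not_le]
    exact hba
  -- the error identity
  · have hkey : (∫ x in (0:ℝ)..1, p.eval x * iteratedDerivWithin n f s (a + (b - a) * x)) =
        ∫ x in (0:ℝ)..1, |p.eval x| := by
      apply intervalIntegral.integral_congr
      intro x hx
      show p.eval x * iteratedDerivWithin n f s (a + (b - a) * x) = |p.eval x|
      rw [Set.uIcc_of_le (by norm_num : (0:ℝ) ≤ 1)] at hx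
      have hmem : a + (b - a) * x ∈ s := by
        constructor
        · nlinarith [hx.1, hx.2]
        · nlinarith [hx.1, hx.2]
      have hxx : ((a + (b - a) * x) - a) / (b - a) = x := by
        field_simp
        ring
      by_cases hpz : p.eval x = 0
      · simp [hpz]
      · rw [hB _ hmem (by rw [hxx]; exact hpz)]
        unfold sgnP
        rw [hxx]
        rcases le_or_gt 0 (p.eval x) with h | h
        · rw [if_pos h, abs_of_nonneg h, mul_one]
        · rw [if_neg (not_le.mpr h), abs_of_neg h, mul_neg_one]
    unfold errE
    rw [hkey, abs_mul, abs_mul]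
    have h2 : |(-1 : ℝ) ^ n| = 1 := by
      rw [abs_pow]; simp
    rw [h2, one_mul, abs_of_pos (pow_pos hba _)]
    congr 1
    rw [abs_of_nonneg]
    apply intervalIntegral.integral_nonneg (by norm_num)
    intro x _
    exact abs_nonneg _
end

section
/- Let n ≥ 1 be an integer, a < b real, p a real polynomial of degree n with leading coefficient 1/n!, and let 1 < r < ∞ with s = r/(r−1). Then there exists f : [a,b] → ℝ with f^{(n-1)} absolutely continuous on [a,b], f^{(n)} ∈ L^s([a,b]) with ‖f^{(n)}‖_{L^s([a,b])} > 0, and |E_{(a,b)}(p,f)| = (b−a)^{n+1/r} ‖p‖_r ‖f^{(n)}‖_{L^s([a,b])}; equality holds for any f with f^{(n)}(a+(b−a)x) = |p(x)|^{r/s} sgn(p(x)) for a.e. x ∈ [0,1]. -/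
open MeasureTheory intervalIntegral

/-- Signed power `t ↦ sgn(t) |t|^e`. -/
noncomputable def sgnPow (e : ℝ) (t : ℝ) : ℝ := Real.sign t * |t| ^ e

lemma abs_sign_le_one (u : ℝ) : |Real.sign u| ≤ 1 := by
  rcases lt_trichotomy u 0 with h | h | h <;>
    simp [Real.sign_of_neg, Real.sign_of_pos, Real.sign_zero, h, *]

lemma continuous_sgnPow {e : ℝ} (he : 0 < e) : Continuous (sgnPow e) := by
  have habs : Continuous fun u : ℝ => |u| ^ e :=
    continuous_abs.rpow_const fun x => Or.inr he.le
  rw [continuous_iff_continuousAt]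
  intro t
  rcases lt_trichotomy t 0 with h | h | h
  · refine ContinuousAt.congr (habs.neg.continuousAt) ?_
    filter_upwards [Iio_mem_nhds h] with u hu
    simp [sgnPow, Real.sign_of_neg hu]
  · subst h
    have h0 : sgnPow e 0 = 0 := by simp [sgnPow, Real.sign_zero]
    rw [ContinuousAt, h0]
    refine squeeze_zero_norm (a := fun u => |u| ^ e) (fun u => ?_) ?_
    · have h1 : |Real.sign u| ≤ 1 := abs_sign_le_one u
      have h2 : (0:ℝ) ≤ |u| ^ e := Real.rpow_nonneg (abs_nonneg u) e
      calc ‖sgnPow e u‖ = |Real.sign u| * |(|u| ^ e)| := abs_mul _ _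
        _ ≤ 1 * |u| ^ e := by
            rw [abs_of_nonneg h2]
            exact mul_le_mul_of_nonneg_right h1 h2
        _ = |u| ^ e := one_mul _
    · have := habs.tendsto 0
      simpa [Real.zero_rpow he.ne'] using this
  · refine ContinuousAt.congr habs.continuousAt ?_
    filter_upwards [Ioi_mem_nhds h] with u hu
    simp [sgnPow, Real.sign_of_pos hu]

lemma mul_self_sgnPow {e : ℝ} (he : 0 < e) (t : ℝ) :
    t * sgnPow e t = |t| ^ (1 + e) := by
  by_cases ht : t = 0
  · simp [ht, sgnPow, Real.sign_zero, Real.zero_rpow (by positivity : (1:ℝ) + e ≠ 0)]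
  · have hsign : t * Real.sign t = |t| := by
      rcases lt_trichotomy t 0 with h | h | h
      · rw [Real.sign_of_neg h, abs_of_neg h]; ring
      · exact absurd h ht
      · rw [Real.sign_of_pos h, abs_of_pos h]; ring
    calc t * sgnPow e t = t * Real.sign t * |t| ^ e := by rw [sgnPow]; ring
      _ = |t| * |t| ^ e := by rw [hsign]
      _ = |t| ^ (1:ℝ) * |t| ^ e := by rw [Real.rpow_one]
      _ = |t| ^ (1 + e) := (Real.rpow_add' (abs_nonneg t) (by positivity)).symm

lemma abs_sgnPow_rpow {e s : ℝ} (he : 0 < e) (hs : s ≠ 0) (t : ℝ) :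
    |sgnPow e t| ^ s = |t| ^ (e * s) := by
  by_cases ht : t = 0
  · simp [ht, sgnPow, Real.sign_zero, Real.zero_rpow hs,
      Real.zero_rpow (by positivity : e * s ≠ 0)]
  · have h1 : |Real.sign t| = 1 := by
      rcases lt_trichotomy t 0 with h | h | h
      · simp [Real.sign_of_neg h]
      · exact absurd h ht
      · simp [Real.sign_of_pos h]
    have : |sgnPow e t| = |t| ^ e := by
      rw [sgnPow, abs_mul, h1, one_mul, abs_of_nonneg (Real.rpow_nonneg (abs_nonneg t) e)]
    rw [this, ← Real.rpow_mul (abs_nonneg t)]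

/-- The `k`-fold antiderivative of `g` (with base point `0`). -/
noncomputable def iterAnti (g : ℝ → ℝ) : ℕ → ℝ → ℝ
  | 0 => g
  | (k+1) => fun x => ∫ t in (0:ℝ)..x, iterAnti g k t

lemma iterAnti_continuous {g : ℝ → ℝ} (hg : Continuous g) : ∀ k, Continuous (iterAnti g k)
  | 0 => hg
  | (k+1) => by
    have h := iterAnti_continuous hg k
    exact continuous_iff_continuousAt.2 fun x =>
      ((h.integral_hasStrictDerivAt 0 x).hasDerivAt.differentiableAt).continuousAt

lemma iterAnti_hasDerivAt {g : ℝ → ℝ} (hg : Continuous g) (k : ℕ) (x : ℝ) :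
    HasDerivAt (iterAnti g (k+1)) (iterAnti g k x) x :=
  ((iterAnti_continuous hg k).integral_hasStrictDerivAt 0 x).hasDerivAt

lemma iterAnti_deriv {g : ℝ → ℝ} (hg : Continuous g) (k : ℕ) :
    deriv (iterAnti g (k+1)) = iterAnti g k :=
  funext fun x => (iterAnti_hasDerivAt hg k x).deriv

lemma iterAnti_contDiff {g : ℝ → ℝ} (hg : Continuous g) :
    ∀ k : ℕ, ContDiff ℝ (k : ℕ) (iterAnti g k)
  | 0 => contDiff_zero.2 hg
  | (k+1) => by
    have hcast : ((k+1 : ℕ) : WithTop ℕ∞) = (k : ℕ) + 1 := by norm_cast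
    rw [hcast, contDiff_succ_iff_deriv]
    refine ⟨fun x => (iterAnti_hasDerivAt hg k x).differentiableAt, by simp, ?_⟩
    rw [iterAnti_deriv hg k]
    exact iterAnti_contDiff hg k

lemma iterAnti_iteratedDeriv {g : ℝ → ℝ} (hg : Continuous g) :
    ∀ j k : ℕ, iteratedDeriv j (iterAnti g (k + j)) = iterAnti g k
  | 0, k => by simp
  | (j+1), k => by
    rw [iteratedDeriv_succ', show k + (j+1) = (k+j)+1 from rfl, iterAnti_deriv hg]
    exact iterAnti_iteratedDeriv hg j k

lemma iteratedDerivWithin_eq_iteratedDeriv_of_contDiff {f : ℝ → ℝ} {m k : ℕ}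
    (hf : ContDiff ℝ (m : ℕ) f) (hk : k ≤ m) {s : Set ℝ} (hs : UniqueDiffOn ℝ s)
    {x : ℝ} (hx : x ∈ s) :
    iteratedDerivWithin k f s x = iteratedDeriv k f x := by
  have h0 : HasFTaylorSeriesUpToOn ((m : ℕ) : WithTop ℕ∞) f
      (ftaylorSeriesWithin ℝ f Set.univ) Set.univ :=
    hf.contDiffOn.ftaylorSeriesWithin uniqueDiffOn_univ
  have h1 := (h0.mono (Set.subset_univ s)).eq_iteratedFDerivWithin_of_uniqueDiffOn
    (by exact_mod_cast hk) hs hx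
  have h2 := h0.eq_iteratedFDerivWithin_of_uniqueDiffOn
    (by exact_mod_cast hk) uniqueDiffOn_univ (Set.mem_univ x)
  rw [iteratedDerivWithin_eq_iteratedFDerivWithin, iteratedDeriv_eq_iteratedFDeriv,
    ← h1, h2, iteratedFDerivWithin_univ]

/-- **sharpness, `1 < r < ∞`.** For `n ≥ 1`, `a < b`, a real polynomial `p` of
degree `n` with leading coefficient `1/n!`, and `1 < r < ∞` with `s = r/(r−1)`, there exists
`f : [a,b] → ℝ` with `f^{(n-1)}` absolutely continuous on `[a,b]`, `f^{(n)} ∈ L^s([a,b])` with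
`‖f^{(n)}‖_{L^s} > 0`, and `|E_{(a,b)}(p,f)| = (b−a)^{n+1/r} ‖p‖_r ‖f^{(n)}‖_{L^s([a,b])}`. -/
theorem holder_bound_sharp (n : ℕ) (hn : 1 ≤ n) (a b : ℝ) (hab : a < b)
    (p : Polynomial ℝ) (hdeg : p.natDegree = n)
    (hlead : p.leadingCoeff = 1 / (n.factorial : ℝ))
    (r s : ℝ) (hr : 1 < r) (hs : s = r / (r - 1)) :
    ∃ f : ℝ → ℝ,
      ContDiffOn ℝ (n - 1 : ℕ) f (Set.Icc a b) ∧
      ACOn (iteratedDerivWithin (n - 1) f (Set.Icc a b))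
        (iteratedDerivWithin n f (Set.Icc a b)) a b ∧
      (0 : ℝ) <
        (∫ x in a..b, |iteratedDerivWithin n f (Set.Icc a b) x| ^ s) ^ (1 / s) ∧
      |errE a b n (fun x => p.eval x) (iteratedDerivWithin n f (Set.Icc a b))| =
        (b - a) ^ ((n : ℝ) + 1 / r) * (∫ x in (0:ℝ)..1, |p.eval x| ^ r) ^ (1 / r) *
          (∫ x in a..b, |iteratedDerivWithin n f (Set.Icc a b) x| ^ s) ^ (1 / s) := by
  obtain ⟨m, rfl⟩ : ∃ m, n = m + 1 := ⟨n - 1, (Nat.succ_pred_eq_of_pos hn).symm⟩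
  have hc : (0:ℝ) < b - a := sub_pos.2 hab
  set c : ℝ := b - a with hcdef
  have hc0 : c ≠ 0 := hc.ne'
  have hr0 : (0:ℝ) < r := lt_trans one_pos hr
  have hr1 : (0:ℝ) < r - 1 := by linarith
  have hs0 : (0:ℝ) < s := by rw [hs]; positivity
  have hrs : (r - 1) * s = r := by rw [hs]; field_simp
  have hinv : 1 / r + 1 / s = 1 := by rw [hs]; field_simp; ring
  -- The polynomial is nonzero
  have hp0 : p ≠ 0 := fun h => by simp [h] at hdeg
  -- the optimal n-th derivative
  set G : ℝ → ℝ := fun y => sgnPow (r - 1) (p.eval ((y - a) / c)) with hGdef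
  have hG : Continuous G :=
    (continuous_sgnPow hr1).comp (p.continuous.comp ((continuous_id.sub continuous_const).div_const c))
  set f : ℝ → ℝ := iterAnti G (m + 1) with hfdef
  have hfC : ContDiff ℝ ((m + 1 : ℕ)) f := iterAnti_contDiff hG (m + 1)
  have hUD : UniqueDiffOn ℝ (Set.Icc a b) := uniqueDiffOn_Icc hab
  -- identification of the iterated derivatives within [a,b]
  have hDn : ∀ x ∈ Set.Icc a b, iteratedDerivWithin (m + 1) f (Set.Icc a b) x = G x := by
    intro x hx
    rw [iteratedDerivWithin_eq_iteratedDeriv_of_contDiff hfC le_rfl hUD hx]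
    have h := iterAnti_iteratedDeriv hG (m + 1) 0
    rw [Nat.zero_add] at h
    rw [hfdef, h]
    rfl
  have hDm : ∀ x ∈ Set.Icc a b, iteratedDerivWithin m f (Set.Icc a b) x = iterAnti G 1 x := by
    intro x hx
    rw [iteratedDerivWithin_eq_iteratedDeriv_of_contDiff hfC (Nat.le_succ m) hUD hx]
    have h := iterAnti_iteratedDeriv hG m 1
    rw [Nat.add_comm 1 m] at h
    rw [hfdef, h]
  -- the positive quantity A = ∫₀¹ |p|^r
  set A : ℝ := ∫ x in (0:ℝ)..1, |p.eval x| ^ r with hAdef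
  have hcontA : Continuous fun x : ℝ => |p.eval x| ^ r :=
    (p.continuous.abs).rpow_const fun x => Or.inr hr0.le
  have hA : 0 < A := by
    rw [hAdef]
    refine (integral_pos_iff_support_of_nonneg_ae
      (Filter.Eventually.of_forall fun x => Real.rpow_nonneg (abs_nonneg _) r)
      (hcontA.intervalIntegrable 0 1)).2 ⟨one_pos, ?_⟩
    have hsub : Set.Ioc (0:ℝ) 1 \ {x | p.IsRoot x} ⊆
        Function.support (fun x : ℝ => |p.eval x| ^ r) ∩ Set.Ioc 0 1 := by
      rintro x ⟨hx1, hx2⟩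
      refine ⟨?_, hx1⟩
      have hne : p.eval x ≠ 0 := hx2
      have : (0:ℝ) < |p.eval x| ^ r :=
        Real.rpow_pos_of_pos (abs_pos.2 hne) r
      exact this.ne'
    have hnull : volume {x : ℝ | p.IsRoot x} = 0 :=
      (Polynomial.finite_setOf_isRoot hp0).measure_zero _
    have h1 : volume (Set.Ioc (0:ℝ) 1 \ {x | p.IsRoot x}) = 1 := by
      rw [measure_diff_null hnull]
      simp
    calc (0 : ENNReal) < 1 := one_pos
      _ = volume (Set.Ioc (0:ℝ) 1 \ {x | p.IsRoot x}) := h1.symm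
      _ ≤ _ := measure_mono hsub
  -- evaluation of G along the affine map
  have hGx : ∀ x : ℝ, G (a + c * x) = sgnPow (r - 1) (p.eval x) := by
    intro x
    have : (a + c * x - a) / c = x := by field_simp; ring
    rw [hGdef]; simp only [this]
  -- first integral identity
  have I1 : (∫ x in (0:ℝ)..1,
      p.eval x * iteratedDerivWithin (m + 1) f (Set.Icc a b) (a + c * x)) = A := by
    have hcongr : Set.EqOn
        (fun x => p.eval x * iteratedDerivWithin (m + 1) f (Set.Icc a b) (a + c * x))
        (fun x => |p.eval x| ^ r) (Set.uIcc (0:ℝ) 1) := by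
      intro x hx
      rw [Set.uIcc_of_le (zero_le_one' ℝ)] at hx
      have hmem : a + c * x ∈ Set.Icc a b := by
        constructor
        · nlinarith [hx.1, hx.2]
        · nlinarith [hx.1, hx.2]
      simp only
      rw [hDn _ hmem, hGx x, mul_self_sgnPow hr1]
      congr 1
      ring
    rw [intervalIntegral.integral_congr hcongr]
  -- second integral identity
  have I2 : (∫ y in a..b, |iteratedDerivWithin (m + 1) f (Set.Icc a b) y| ^ s) = c * A := by
    have hcongr : Set.EqOn
        (fun y => |iteratedDerivWithin (m + 1) f (Set.Icc a b) y| ^ s)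
        (fun y => |p.eval ((y - a) / c)| ^ r) (Set.uIcc a b) := by
      intro y hy
      rw [Set.uIcc_of_le hab.le] at hy
      simp only
      rw [hDn _ hy, hGdef]
      simp only
      rw [abs_sgnPow_rpow hr1 hs0.ne', hrs]
    rw [intervalIntegral.integral_congr hcongr]
    have haff : ∀ y : ℝ, (y - a) / c = c⁻¹ * y + -(a * c⁻¹) := by
      intro y; field_simp; ring
    simp only [haff]
    rw [intervalIntegral.integral_comp_mul_add (fun t => |p.eval t| ^ r) (inv_ne_zero hc0)
      (-(a * c⁻¹))]
    rw [show c⁻¹ * a + -(a * c⁻¹) = 0 by ring,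
      show c⁻¹ * b + -(a * c⁻¹) = 1 by
        rw [show c⁻¹ * b + -(a * c⁻¹) = c⁻¹ * (b - a) by ring, ← hcdef, inv_mul_cancel₀ hc0]]
    simp [smul_eq_mul, hAdef]
  refine ⟨f, ?_, ?_, ?_, ?_⟩
  · -- smoothness of order n - 1 = m
    simp only [Nat.add_sub_cancel]
    exact (hfC.of_le (by exact_mod_cast Nat.le_succ m)).contDiffOn
  · -- absolute continuity
    simp only [Nat.add_sub_cancel]
    have hint : IntervalIntegrable (iteratedDerivWithin (m + 1) f (Set.Icc a b)) volume a b := by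
      refine (hG.intervalIntegrable a b).congr ?_
      have hsubset : Set.uIoc a b ⊆ Set.Icc a b := by
        rw [Set.uIoc_of_le hab.le]
        exact Set.Ioc_subset_Icc_self
      refine fun x hx => ?_
      exact (hDn x (hsubset hx)).symm
    refine ⟨hint, fun x hx => ?_⟩
    have hax : a ∈ Set.Icc a b := Set.left_mem_Icc.2 hab.le
    rw [hDm x hx, hDm a hax]
    have hintG1 : ∀ u v : ℝ, IntervalIntegrable G volume u v := fun u v =>
      hG.intervalIntegrable u v
    have hsplit : iterAnti G 1 x = iterAnti G 1 a + ∫ t in a..x, G t := by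
      show (∫ t in (0:ℝ)..x, G t) = (∫ t in (0:ℝ)..a, G t) + ∫ t in a..x, G t
      rw [intervalIntegral.integral_add_adjacent_intervals (hintG1 0 a) (hintG1 a x)]
    rw [hsplit]
    congr 1
    refine (intervalIntegral.integral_congr ?_).symm
    intro t ht
    have htmem : t ∈ Set.Icc a b := by
      have : Set.uIcc a x ⊆ Set.Icc a b := by
        rw [← Set.uIcc_of_le hab.le]
        exact Set.uIcc_subset_uIcc (Set.mem_uIcc.2 (Or.inl ⟨le_refl a, hab.le⟩))
          (by rw [Set.uIcc_of_le hab.le]; exact hx)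
      exact this ht
    exact hDn t htmem
  · -- positivity of the L^s norm
    rw [I2]
    exact Real.rpow_pos_of_pos (mul_pos hc hA) _
  · -- the equality
    rw [I2]
    rw [show |errE a b (m + 1) (fun x => p.eval x) (iteratedDerivWithin (m + 1) f (Set.Icc a b))|
        = c ^ (m + 2) * A from ?_]
    · have e1 : (c * A) ^ (1 / s) = c ^ (1 / s) * A ^ (1 / s) := Real.mul_rpow hc.le hA.le
      have e2 : c ^ (((m + 1 : ℕ) : ℝ) + 1 / r) * c ^ (1 / s) = c ^ (m + 2) := by
        rw [← Real.rpow_natCast c (m + 2), ← Real.rpow_add hc]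
        congr 1
        push_cast
        linarith [hinv]
      have e3 : A ^ (1 / r) * A ^ (1 / s) = A := by
        rw [← Real.rpow_add hA, hinv, Real.rpow_one]
      calc c ^ (m + 2) * A
          = (c ^ (((m + 1 : ℕ) : ℝ) + 1 / r) * c ^ (1 / s)) * (A ^ (1 / r) * A ^ (1 / s)) := by
            rw [e2, e3]
        _ = c ^ (((m + 1 : ℕ) : ℝ) + 1 / r) * A ^ (1 / r) * (c ^ (1 / s) * A ^ (1 / s)) := by
            ring
        _ = (b - a) ^ (((m + 1 : ℕ) : ℝ) + 1 / r) * A ^ (1 / r) * (c * A) ^ (1 / s) := by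
            rw [e1]
    · rw [errE]
      rw [show (∫ x in (0:ℝ)..1, p.eval x *
          iteratedDerivWithin (m + 1) f (Set.Icc a b) (a + (b - a) * x)) = A from I1]
      rw [abs_mul, abs_mul, abs_pow, abs_neg, abs_one, one_pow, one_mul,
        abs_pow, abs_of_pos hc, abs_of_pos hA]
end

section
/- Let n ≥ 1 be an integer, a < b real, and p a real polynomial of degree n with leading coefficient 1/n!. Then the bound |E_{(a,b)}(p,f)| ≤ (b−a)^n ‖p‖_∞ ‖f^{(n)}‖_{L^1([a,b])} is sharp: there is a sequence of functions f_k : [a,b] → ℝ, each with f_k^{(n-1)} absolutely continuous on [a,b] and ‖f_k^{(n)}‖_{L^1([a,b])} = b−a, such that |E_{(a,b)}(p,f_k)| → (b−a)^{n+1} ‖p‖_∞ as k → ∞. -/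
open MeasureTheory intervalIntegral Filter

lemma exists_antideriv (q : Polynomial ℝ) : ∃ Q : Polynomial ℝ, Q.derivative = q := by
  induction q using Polynomial.induction_on' with
  | add p q hp hq =>
    obtain ⟨P, hP⟩ := hp; obtain ⟨Q, hQ⟩ := hq
    exact ⟨P + Q, by simp [hP, hQ]⟩
  | monomial i c =>
    refine ⟨Polynomial.C (c / (i + 1)) * Polynomial.X ^ (i + 1), ?_⟩
    rw [Polynomial.derivative_C_mul, Polynomial.derivative_X_pow, ← mul_assoc, ← Polynomial.C_mul,
      ← Polynomial.C_mul_X_pow_eq_monomial]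
    congr 2
    push_cast
    field_simp

lemma exists_antideriv_iter (n : ℕ) (q : Polynomial ℝ) :
    ∃ Q : Polynomial ℝ, Polynomial.derivative^[n] Q = q := by
  induction n generalizing q with
  | zero => exact ⟨q, rfl⟩
  | succ n ih =>
    obtain ⟨Q, hQ⟩ := exists_antideriv q
    obtain ⟨Q', hQ'⟩ := ih Q
    exact ⟨Q', by rw [Function.iterate_succ_apply', hQ', hQ]⟩

lemma polyContDiff (Q : Polynomial ℝ) {m : ℕ∞} : ContDiff ℝ m fun x : ℝ => Q.eval x := by
  induction Q using Polynomial.induction_on' with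
  | add p q hp hq => simpa [Polynomial.eval_add] using hp.add hq
  | monomial i c =>
    simpa [Polynomial.eval_monomial] using (contDiff_const (c := c)).mul (contDiff_id.pow i)

lemma polyIDW {s : Set ℝ} (hs : UniqueDiffOn ℝ s) (m : ℕ) (Q : Polynomial ℝ) :
    ∀ x ∈ s, iteratedDerivWithin m (fun y => Q.eval y) s x
      = (Polynomial.derivative^[m] Q).eval x := by
  induction m generalizing Q with
  | zero => intro x hx; simp
  | succ m ih =>
    intro x hx
    rw [iteratedDerivWithin_succ']
    have h1 : Set.EqOn (derivWithin (fun y => Q.eval y) s)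
        (fun y => (Polynomial.derivative Q).eval y) s :=
      fun y hy => Q.derivWithin (hs y hy)
    rw [iteratedDerivWithin_congr h1 hx, ih (Polynomial.derivative Q) x hx,
      Function.iterate_succ_apply]


lemma ratio_tendsto {q : ℝ → ℝ} (hq : Continuous q) (hq0 : ∀ x, 0 ≤ q x)
    {M : ℝ} (hM : 0 < M) (hle : ∀ x ∈ Set.Icc (0:ℝ) 1, q x ≤ M)
    {x₀ : ℝ} (hx₀ : x₀ ∈ Set.Icc (0:ℝ) 1) (hqx₀ : q x₀ = M) :
    (∀ m : ℕ, 0 < ∫ x in Set.Ioc (0:ℝ) 1, q x ^ m) ∧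
      Tendsto (fun m : ℕ => (∫ x in Set.Ioc (0:ℝ) 1, q x ^ (m+1)) /
        (∫ x in Set.Ioc (0:ℝ) 1, q x ^ m)) atTop (nhds M) := by
  set s : Set ℝ := Set.Ioc (0:ℝ) 1 with hs
  have hsm : MeasurableSet s := measurableSet_Ioc
  have hint : ∀ m : ℕ, IntegrableOn (fun x => q x ^ m) s volume :=
    fun m => (hq.pow m).integrableOn_Ioc
  set I : ℕ → ℝ := fun m => ∫ x in s, q x ^ m with hI
  -- interval where q is large
  have key : ∀ c₁ : ℝ, c₁ < M → ∃ u v : ℝ, u < v ∧ Set.Ioc u v ⊆ s ∧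
      ∀ y ∈ Set.Ioc u v, c₁ ≤ q y := by
    intro c₁ hc₁M
    have hopen : IsOpen {y : ℝ | c₁ < q y} := isOpen_lt continuous_const hq
    have hx₀mem : x₀ ∈ {y : ℝ | c₁ < q y} := by simpa [hqx₀] using hc₁M
    obtain ⟨η, hη, hball⟩ := Metric.isOpen_iff.1 hopen x₀ hx₀mem
    refine ⟨max 0 (x₀ - η/2), min 1 (x₀ + η/2), ?_, ?_, ?_⟩
    · rcases max_cases 0 (x₀ - η/2) with ⟨h,h'⟩|⟨h,h'⟩ <;>
        rcases min_cases 1 (x₀ + η/2) with ⟨g,g'⟩|⟨g,g'⟩ <;> rw [h, g] <;>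
        [skip; skip; skip; skip] <;> first | linarith [hx₀.1, hx₀.2] | linarith [hx₀.1, hx₀.2, hη]
    · intro y hy
      exact ⟨lt_of_le_of_lt (le_max_left 0 _) hy.1, le_trans hy.2 (min_le_left 1 _)⟩
    · intro y hy
      have h1 : x₀ - η/2 < y := lt_of_le_of_lt (le_max_right 0 _) hy.1
      have h2 : y ≤ x₀ + η/2 := le_trans hy.2 (min_le_right 1 _)
      have : y ∈ Metric.ball x₀ η := by
        rw [Metric.mem_ball, Real.dist_eq, abs_lt]; constructor <;> linarith
      exact le_of_lt (hball this)
  -- positivity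
  have hlow : ∀ c₁ : ℝ, 0 < c₁ → c₁ < M → ∃ δ : ℝ, 0 < δ ∧ ∀ m : ℕ,
      δ * c₁ ^ m ≤ I m := by
    intro c₁ hc₁ hc₁M
    obtain ⟨u, v, huv, hsub, hge⟩ := key c₁ hc₁M
    refine ⟨v - u, by linarith, fun m => ?_⟩
    have e1 : (v - u) * c₁ ^ m = ∫ _x in Set.Ioc u v, c₁ ^ m := by
      rw [setIntegral_const, measureReal_def, Real.volume_Ioc, ENNReal.toReal_ofReal (by linarith), smul_eq_mul]
    rw [e1]
    calc ∫ _x in Set.Ioc u v, c₁ ^ m ≤ ∫ x in Set.Ioc u v, q x ^ m := by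
          refine setIntegral_mono_on (integrableOn_const ?_) ((hint m).mono_set hsub)
            measurableSet_Ioc (fun x hx => pow_le_pow_left₀ (le_of_lt hc₁) (hge x hx) m)
          rw [Real.volume_Ioc]; exact ENNReal.ofReal_ne_top
      _ ≤ I m := setIntegral_mono_set (hint m)
          (Filter.Eventually.of_forall fun x => pow_nonneg (hq0 x) m)
          (HasSubset.Subset.eventuallyLE hsub)
  have hIpos : ∀ m, 0 < I m := by
    intro m
    obtain ⟨δ, hδ, hlb⟩ := hlow (M/2) (by linarith) (by linarith)
    exact lt_of_lt_of_le (by positivity) (hlb m)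
  refine ⟨hIpos, ?_⟩
  -- upper bound
  have hub : ∀ m : ℕ, I (m+1) ≤ M * I m := by
    intro m
    rw [hI, ← MeasureTheory.integral_const_mul]
    refine setIntegral_mono_on (hint (m+1)) ((hint m).const_mul M) hsm (fun x hx => ?_)
    have h1 : q x * q x ^ m ≤ M * q x ^ m :=
      mul_le_mul_of_nonneg_right (hle x (Set.Ioc_subset_Icc_self hx)) (pow_nonneg (hq0 x) m)
    calc q x ^ (m+1) = q x * q x ^ m := by ring
      _ ≤ M * q x ^ m := h1
  rw [Metric.tendsto_atTop]
  intro ε hε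
  set ε' : ℝ := min ε M / 2 with hε'def
  have hε' : 0 < ε' := by positivity
  have hε'M : ε' < M := lt_of_le_of_lt (by simp [hε'def]; linarith [min_le_right ε M]) (by linarith : M/2 < M)
  have hε'ε : ε' < ε := lt_of_le_of_lt (by simp [hε'def]; linarith [min_le_left ε M]) (by linarith : ε/2 < ε)
  set c₂ : ℝ := M - ε'/2 with hc₂def
  set c₁ : ℝ := M - ε'/4 with hc₁def
  have hc₂ : 0 < c₂ := by simp only [hc₂def]; linarith
  have hc₁ : 0 < c₁ := by simp only [hc₁def]; linarith
  have hc₂₁ : c₂ < c₁ := by simp only [hc₁def, hc₂def]; linarith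
  have hc₁M : c₁ < M := by simp only [hc₁def]; linarith
  obtain ⟨u, v, huv, hsub, hge⟩ := key c₁ hc₁M
  set δ : ℝ := v - u with hδdef
  have hδ : 0 < δ := by simp only [hδdef]; linarith
  set t : Set ℝ := {y : ℝ | c₂ < q y} with ht
  have htm : MeasurableSet t := measurableSet_lt measurable_const hq.measurable
  set T : ℕ → ℝ := fun m => ∫ x in s ∩ t, q x ^ m with hT
  have hsplit : ∀ m : ℕ, T m + ∫ x in s \ t, q x ^ m = I m :=
    fun m => integral_inter_add_diff htm (hint m)
  have hsubst : Set.Ioc u v ⊆ s ∩ t := fun y hy =>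
    ⟨hsub hy, lt_of_lt_of_le hc₂₁ (hge y hy)⟩
  have hTge : ∀ m : ℕ, δ * c₁ ^ m ≤ T m := by
    intro m
    have e1 : δ * c₁ ^ m = ∫ _x in Set.Ioc u v, c₁ ^ m := by
      rw [setIntegral_const, measureReal_def, Real.volume_Ioc, ENNReal.toReal_ofReal (by linarith), smul_eq_mul]
    rw [e1]
    calc ∫ _x in Set.Ioc u v, c₁ ^ m ≤ ∫ x in Set.Ioc u v, q x ^ m := by
          refine setIntegral_mono_on (integrableOn_const ?_)
            (((hint m).mono_set hsub)) measurableSet_Ioc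
            (fun x hx => pow_le_pow_left₀ (le_of_lt hc₁) (hge x hx) m)
          rw [Real.volume_Ioc]; exact ENNReal.ofReal_ne_top
      _ ≤ T m := setIntegral_mono_set ((hint m).mono_set Set.inter_subset_left)
          (Filter.Eventually.of_forall fun x => pow_nonneg (hq0 x) m)
          (HasSubset.Subset.eventuallyLE hsubst)
  have hBle : ∀ m : ℕ, (∫ x in s \ t, q x ^ m) ≤ c₂ ^ m := by
    intro m
    have h1 : (∫ x in s \ t, q x ^ m) ≤ ∫ _x in s \ t, c₂ ^ m := by
      refine setIntegral_mono_on ((hint m).mono_set Set.diff_subset)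
        (integrableOn_const ?_) (hsm.diff htm) (fun x hx => ?_)
      · exact (lt_of_le_of_lt (measure_mono Set.diff_subset) (by rw [hs, Real.volume_Ioc]; exact ENNReal.ofReal_lt_top)).ne
      · exact pow_le_pow_left₀ (hq0 x) (le_of_not_gt hx.2) m
    have h2 : (∫ _x in s \ t, c₂ ^ m) ≤ c₂ ^ m := by
      rw [setIntegral_const, smul_eq_mul, measureReal_def]
      have hv : (volume (s \ t)).toReal ≤ 1 := by
        have : volume (s \ t) ≤ volume s := measure_mono Set.diff_subset
        have h3 : volume s = ENNReal.ofReal 1 := by rw [hs, Real.volume_Ioc]; norm_num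
        calc (volume (s \ t)).toReal ≤ (volume s).toReal :=
              ENNReal.toReal_mono (by rw [h3]; exact ENNReal.ofReal_ne_top) this
          _ = 1 := by rw [h3, ENNReal.toReal_ofReal]; norm_num
      nlinarith [pow_nonneg (le_of_lt hc₂) m]
    linarith
  have hTpos : ∀ m : ℕ, 0 < T m := fun m => lt_of_lt_of_le (by positivity) (hTge m)
  have hnum : ∀ m : ℕ, c₂ * T m ≤ I (m+1) := by
    intro m
    have h1 : c₂ * T m = ∫ x in s ∩ t, c₂ * q x ^ m := by
      rw [hT, MeasureTheory.integral_const_mul]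
    have h2 : (∫ x in s ∩ t, c₂ * q x ^ m) ≤ T (m+1) := by
      refine setIntegral_mono_on (((hint m).mono_set Set.inter_subset_left).const_mul c₂)
        ((hint (m+1)).mono_set Set.inter_subset_left) (hsm.inter htm) (fun x hx => ?_)
      have := mul_le_mul_of_nonneg_right (le_of_lt hx.2) (pow_nonneg (hq0 x) m)
      calc c₂ * q x ^ m ≤ q x * q x ^ m := this
        _ = q x ^ (m+1) := by ring
    have h3 : T (m+1) ≤ I (m+1) := by
      have := hsplit (m+1)
      have hB : 0 ≤ ∫ x in s \ t, q x ^ (m+1) :=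
        setIntegral_nonneg (hsm.diff htm) (fun x _ => pow_nonneg (hq0 x) _)
      linarith
    linarith
  -- the lower comparison sequence tends to c₂
  set L : ℕ → ℝ := fun m => c₂ * (δ * c₁ ^ m) / (δ * c₁ ^ m + c₂ ^ m) with hL
  have hLtend : Tendsto L atTop (nhds c₂) := by
    have hLeq : ∀ m : ℕ, L m = c₂ * δ / (δ + (c₂ / c₁) ^ m) := by
      intro m
      rw [hL, div_pow]
      have hc₁m : (0:ℝ) < c₁ ^ m := pow_pos hc₁ m
      field_simp
    have h0 : Tendsto (fun m : ℕ => (c₂/c₁) ^ m) atTop (nhds 0) := by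
      apply tendsto_pow_atTop_nhds_zero_of_lt_one (by positivity)
      rw [div_lt_one hc₁]; exact hc₂₁
    have h1 : Tendsto (fun m : ℕ => c₂ * δ / (δ + (c₂/c₁) ^ m)) atTop
        (nhds (c₂ * δ / (δ + 0))) := by
      exact tendsto_const_nhds.div (tendsto_const_nhds.add h0) (by simp; linarith)
    have h2 : c₂ * δ / (δ + 0) = c₂ := by
      rw [add_zero, mul_div_assoc, div_self (ne_of_gt hδ), mul_one]
    rw [funext hLeq]
    rw [h2] at h1
    exact h1
  have hev : ∀ᶠ m in atTop, M - ε' < L m :=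
    hLtend.eventually (eventually_gt_nhds (by simp only [hc₂def]; linarith))
  obtain ⟨N, hN⟩ := eventually_atTop.1 hev
  refine ⟨N, fun m hm => ?_⟩
  have hLm := hN m hm
  -- R m bounds
  have hRub : I (m+1) / I m ≤ M := by
    rw [div_le_iff₀ (hIpos m)]; exact hub m
  have hRlb1 : c₂ * T m / (T m + c₂ ^ m) ≤ I (m+1) / I m := by
    apply div_le_div₀ (le_trans (mul_pos hc₂ (hTpos m)).le (hnum m)) (hnum m) (hIpos m)
    have := hsplit m
    linarith [hBle m]
  have hRlb2 : L m ≤ c₂ * T m / (T m + c₂ ^ m) := by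
    rw [hL, div_le_div_iff₀ (add_pos (mul_pos hδ (pow_pos hc₁ m)) (pow_pos hc₂ m))
      (add_pos (hTpos m) (pow_pos hc₂ m))]
    have h1 : δ * c₁ ^ m ≤ T m := hTge m
    nlinarith [mul_nonneg (mul_nonneg hc₂.le (pow_nonneg hc₂.le m)) (sub_nonneg.2 h1)]
  have hfin : M - ε' < I (m+1) / I m := lt_of_lt_of_le hLm (le_trans hRlb2 hRlb1)
  rw [Real.dist_eq, abs_of_nonpos (by linarith)]
  linarith

/-- **sharpness, `r = ∞`, `s = 1`.** For `n ≥ 1`, `a < b` and a real polynomial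
`p` of degree `n` with leading coefficient `1/n!`, there is a sequence `f_k : [a,b] → ℝ`, each
with `f_k^{(n-1)}` absolutely continuous on `[a,b]` and `‖f_k^{(n)}‖_{L^1([a,b])} = b − a`,
such that `|E_{(a,b)}(p,f_k)| → (b−a)^{n+1} max_{x∈[0,1]} |p(x)|` as `k → ∞`. -/
theorem holder_bound_sharp_infty_one (n : ℕ) (hn : 1 ≤ n) (a b : ℝ) (hab : a < b)
    (p : Polynomial ℝ) (hdeg : p.natDegree = n)
    (hlead : p.leadingCoeff = 1 / (n.factorial : ℝ)) :
    ∃ F : ℕ → ℝ → ℝ,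
      (∀ k, ContDiffOn ℝ (n - 1 : ℕ) (F k) (Set.Icc a b) ∧
        ACOn (iteratedDerivWithin (n - 1) (F k) (Set.Icc a b))
          (iteratedDerivWithin n (F k) (Set.Icc a b)) a b) ∧
      (∀ k, (∫ x in a..b, |iteratedDerivWithin n (F k) (Set.Icc a b) x|) = b - a) ∧
      Tendsto
        (fun k =>
          |errE a b n (fun x => p.eval x) (iteratedDerivWithin n (F k) (Set.Icc a b))|)
        atTop
        (nhds ((b - a) ^ (n + 1) * sSup ((fun x => |p.eval x|) '' Set.Icc (0:ℝ) 1))) := by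
  have hba : 0 < b - a := sub_pos.2 hab
  have hp0 : p ≠ 0 := by
    intro h
    rw [h, Polynomial.leadingCoeff_zero] at hlead
    have h1 : (0:ℝ) < (n.factorial : ℝ) := Nat.cast_pos.2 n.factorial_pos
    rw [eq_comm, div_eq_zero_iff] at hlead
    rcases hlead with h2 | h2 <;> [exact one_ne_zero h2; exact (ne_of_gt h1) h2]
  set qa : ℝ → ℝ := fun x => |p.eval x| with hqadef
  have hqa : Continuous qa := p.continuous.abs
  set M : ℝ := sSup (qa '' Set.Icc (0:ℝ) 1) with hMdef
  obtain ⟨x₀, hx₀, hsup, hmax⟩ := isCompact_Icc.exists_sSup_image_eq_and_ge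
    (Set.nonempty_Icc.2 (by norm_num : (0:ℝ) ≤ 1)) hqa.continuousOn
  obtain ⟨x₁, hx₁, hx₁r⟩ := (Set.Icc_infinite (show (0:ℝ) < 1 by norm_num)).exists_notMem_finite
    (p.finite_setOf_isRoot hp0)
  have hx₁r' : p.eval x₁ ≠ 0 := hx₁r
  have hMpos : 0 < M := by
    rw [hMdef, hsup]; exact lt_of_lt_of_le (abs_pos.2 hx₁r') (hmax x₁ hx₁)
  obtain ⟨hIpos, hR⟩ := ratio_tendsto hqa (fun x => abs_nonneg _) hMpos
    (fun x hx => by rw [hMdef, hsup]; exact hmax x hx) hx₀ (by rw [hMdef, hsup])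
  set I : ℕ → ℝ := fun m => ∫ x in Set.Ioc (0:ℝ) 1, qa x ^ m with hIdef
  -- affine composed polynomial
  set pc : Polynomial ℝ := p.comp (Polynomial.C (b-a)⁻¹ * (Polynomial.X - Polynomial.C a))
    with hpcdef
  have hpc_eval : ∀ y : ℝ, pc.eval y = p.eval ((b-a)⁻¹ * (y - a)) := by
    intro y; simp [hpcdef, Polynomial.eval_comp]
  have hpc_aff : ∀ x : ℝ, pc.eval (a + (b-a)*x) = p.eval x := by
    intro x; rw [hpc_eval]; congr 1; field_simp; ring
  set c : ℕ → ℝ := fun k => ∫ y in a..b, |(pc ^ (2*k+1)).eval y| with hcdef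
  have habs : ∀ k : ℕ, ∀ y : ℝ, |(pc ^ (2*k+1)).eval y| = qa ((y - a) * (b-a)⁻¹) ^ (2*k+1) := by
    intro k y
    rw [Polynomial.eval_pow, abs_pow, hpc_eval, hqadef]
    rw [mul_comm ((b-a)⁻¹) (y - a)]
  have hc : ∀ k : ℕ, c k = (b-a) * I (2*k+1) := by
    intro k
    rw [hcdef]
    simp only [habs]
    have h1 : (∫ y in a..b, qa ((y - a) * (b-a)⁻¹) ^ (2*k+1))
        = ∫ y in (a-a)..(b-a), qa (y * (b-a)⁻¹) ^ (2*k+1) :=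
      intervalIntegral.integral_comp_sub_right (fun z => qa (z * (b-a)⁻¹) ^ (2*k+1)) a
    have h2 : (∫ y in (0:ℝ)..(b-a), qa (y * (b-a)⁻¹) ^ (2*k+1))
        = ((b-a)⁻¹)⁻¹ • ∫ x in (0*(b-a)⁻¹)..((b-a)*(b-a)⁻¹), qa x ^ (2*k+1) :=
      intervalIntegral.integral_comp_mul_right (fun z => qa z ^ (2*k+1)) (inv_ne_zero hba.ne')
    rw [h1, sub_self, h2, inv_inv, zero_mul, mul_inv_cancel₀ hba.ne', smul_eq_mul]
    congr 1
    rw [intervalIntegral.integral_of_le (by norm_num : (0:ℝ) ≤ 1), hIdef]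
  have hcpos : ∀ k, 0 < c k := fun k => by
    rw [hc k]; exact mul_pos hba (hIpos _)
  set d : ℕ → ℝ := fun k => (b-a) / c k with hddef
  have hdpos : ∀ k, 0 < d k := fun k => div_pos hba (hcpos k)
  set G : ℕ → Polynomial ℝ := fun k => Polynomial.C (d k) * pc ^ (2*k+1) with hGdef
  choose Q hQ using fun k => exists_antideriv_iter n (G k)
  have hUD : UniqueDiffOn ℝ (Set.Icc a b) := uniqueDiffOn_Icc hab
  have hIDWn : ∀ k, ∀ x ∈ Set.Icc a b,
      iteratedDerivWithin n (fun y => (Q k).eval y) (Set.Icc a b) x = (G k).eval x := by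
    intro k x hx
    rw [polyIDW hUD n (Q k) x hx, hQ k]
  have hGeval : ∀ k, ∀ y : ℝ, (G k).eval y = d k * (pc.eval y) ^ (2*k+1) := by
    intro k y; rw [hGdef]; simp [Polynomial.eval_pow]
  refine ⟨fun k => fun y => (Q k).eval y, fun k => ?_, fun k => ?_, ?_⟩
  · -- bullet 1
    constructor
    · exact (polyContDiff (Q k)).contDiffOn
    · have hn1 : n - 1 + 1 = n := Nat.succ_pred_eq_of_pos hn
      set W : Polynomial ℝ := Polynomial.derivative^[n-1] (Q k) with hWdef
      have hrel : Polynomial.derivative^[n] (Q k) = Polynomial.derivative W := by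
        rw [hWdef]
        conv_lhs => rw [← hn1]
        exact Function.iterate_succ_apply' _ _ _
      have hIDWn1 : ∀ x ∈ Set.Icc a b,
          iteratedDerivWithin (n-1) (fun y => (Q k).eval y) (Set.Icc a b) x = W.eval x :=
        fun x hx => polyIDW hUD (n-1) (Q k) x hx
      constructor
      · rw [intervalIntegrable_iff_integrableOn_Ioc_of_le hab.le]
        refine (Continuous.integrableOn_Ioc (f := fun x => d k * (pc ^ (2*k+1)).eval x)
          (continuous_const.mul (pc ^ (2*k+1)).continuous)).congr_fun ?_ measurableSet_Ioc
        intro x hx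
        simp only
        rw [hIDWn k x (Set.Ioc_subset_Icc_self hx), hGeval k x, Polynomial.eval_pow]
      · intro x hx
        rw [hIDWn1 x hx, hIDWn1 a ⟨le_refl a, hab.le⟩]
        have hcong : (∫ t in a..x, iteratedDerivWithin n (fun y => (Q k).eval y)
            (Set.Icc a b) t) = ∫ t in a..x, (Polynomial.derivative W).eval t := by
          apply intervalIntegral.integral_congr
          intro t ht
          rw [Set.uIcc_of_le hx.1] at ht
          rw [hIDWn k t (Set.Icc_subset_Icc le_rfl hx.2 ht), ← hQ k, hrel]
        rw [hcong, intervalIntegral.integral_eq_sub_of_hasDerivAt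
          (fun t _ => W.hasDerivAt t)
          ((Polynomial.derivative W).continuous.intervalIntegrable a x)]
        ring
  · -- bullet 2
    have hEq : Set.EqOn (fun x => |iteratedDerivWithin n (fun y => (Q k).eval y)
        (Set.Icc a b) x|) (fun x => d k * |(pc ^ (2*k+1)).eval x|) (Set.uIcc a b) := by
      intro x hx
      rw [Set.uIcc_of_le hab.le] at hx
      simp only
      rw [hIDWn k x hx, hGeval k x, abs_mul, abs_of_pos (hdpos k), Polynomial.eval_pow, abs_pow]
    rw [intervalIntegral.integral_congr hEq, intervalIntegral.integral_const_mul]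
    have hck : (∫ y in a..b, |(pc ^ (2*k+1)).eval y|) = c k := by rw [hcdef]
    rw [hck]
    have hdk : d k = (b-a) / c k := by rw [hddef]
    rw [hdk]
    exact div_mul_cancel₀ (b-a) (hcpos k).ne'
  · -- bullet 3
    have hdk : ∀ k, d k = 1 / I (2*k+1) := by
      intro k
      have : d k = (b-a) / c k := by rw [hddef]
      rw [this, hc k, div_mul_eq_div_div, div_self hba.ne']
    have heq : ∀ k : ℕ, |errE a b n (fun x => p.eval x)
        (iteratedDerivWithin n (fun y => (Q k).eval y) (Set.Icc a b))|
        = (b-a)^(n+1) * (I (2*k+1+1) / I (2*k+1)) := by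
      intro k
      rw [errE]
      have hEq : Set.EqOn
          (fun x => p.eval x * iteratedDerivWithin n (fun y => (Q k).eval y)
            (Set.Icc a b) (a + (b-a)*x))
          (fun x => d k * (p.eval x) ^ (2*k+1+1)) (Set.uIcc (0:ℝ) 1) := by
        intro x hx
        rw [Set.uIcc_of_le (by norm_num : (0:ℝ) ≤ 1)] at hx
        have hmem : a + (b-a)*x ∈ Set.Icc a b := by
          constructor
          · nlinarith [hx.1, hx.2]
          · nlinarith [hx.1, hx.2]
        simp only
        rw [hIDWn k _ hmem, hGeval k _, hpc_aff]
        ring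
      rw [intervalIntegral.integral_congr hEq, intervalIntegral.integral_const_mul]
      have hI2 : (∫ x in (0:ℝ)..1, p.eval x ^ (2*k+1+1)) = I (2*k+1+1) := by
        rw [hIdef, intervalIntegral.integral_of_le (by norm_num : (0:ℝ) ≤ 1)]
        congr 1
        funext x
        rw [hqadef]
        rw [Even.pow_abs ⟨k+1, by ring⟩]
      rw [hI2, abs_mul, abs_mul, abs_pow, abs_neg, abs_one, one_pow, one_mul,
        abs_of_pos (pow_pos hba (n+1)), abs_mul, abs_of_pos (hdpos k),
        abs_of_pos (hIpos (2*k+1+1)), hdk k]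
      congr 1
      exact one_div_mul_eq_div _ _
    rw [funext heq]
    have h2k : Tendsto (fun k : ℕ => 2*k+1) atTop atTop :=
      tendsto_atTop_mono (fun k => by simp only [id_eq]; omega) tendsto_id
    exact (tendsto_const_nhds (x := (b-a)^(n+1)) (f := atTop)).mul (hR.comp h2k)
end
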